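/- arXiv:2012.02231 — 5 statements merged into one kernel-verified Lean document; each statement's English description precedes it below -/
import Mathlib

section
/- Let N be a rooted binary phylogenetic network on X, let A ⊆ X, and let G_A be the path graph of N on A (the subgraph consisting of all directed paths from the lowest stable ancestor of A to leaves in A). If u and v are vertices of G_A and every directed path in G_A from u to a fixed leaf ℓ ∈ A traverses v, then every directed path in N from u to ℓ traverses v. -/
open scoped Classical

/-- A directed graph with a finite vertex set and a multiset of arcs
(so that parallel arcs can be represented). -/
structure Digraph' (α : Type*) where
  V : Finset α
  E : Multiset (α × α)

namespace Digraph'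

variable {α : Type*} [DecidableEq α]

/-- In-degree of a vertex. -/
noncomputable def inDeg (G : Digraph' α) (v : α) : ℕ :=
  (G.E.filter (fun e => e.2 = v)).card

/-- Out-degree of a vertex. -/
noncomputable def outDeg (G : Digraph' α) (v : α) : ℕ :=
  (G.E.filter (fun e => e.1 = v)).card

/-- A (directed) path, given as its nonempty list of vertices. -/
def IsPath (G : Digraph' α) (p : List α) : Prop :=
  p ≠ [] ∧ (∀ v ∈ p, v ∈ G.V) ∧ p.Chain' (fun u v => (u, v) ∈ G.E)

/-- A directed path from `u` to `v`. -/
def PathFrom (G : Digraph' α) (u v : α) (p : List α) : Prop :=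
  G.IsPath p ∧ p.head? = some u ∧ p.getLast? = some v

/-- There is a directed path from `u` to `v` (possibly trivial). -/
def Reaches (G : Digraph' α) (u v : α) : Prop := ∃ p, G.PathFrom u v p

/-- Acyclicity: no arc whose head reaches its tail. -/
def Acyclic (G : Digraph' α) : Prop := ∀ e ∈ G.E, ¬ G.Reaches e.2 e.1

/-- `u` is a stable ancestor of `X'` (w.r.t. root `ρ`): every path from
`ρ` to each `x ∈ X'` traverses `u`. -/
def StableAncestor (G : Digraph' α) (ρ : α) (X' : Finset α) (u : α) : Prop :=
  ∀ x ∈ X', ∀ p, G.PathFrom ρ x p → u ∈ p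

/-- `u` is a lowest stable ancestor of `X'`: it is a stable ancestor and
no distinct stable ancestor of `X'` is a descendant of `u`. -/
def IsLowestSA (G : Digraph' α) (ρ : α) (X' : Finset α) (u : α) : Prop :=
  G.StableAncestor ρ X' u ∧
    ∀ v, G.StableAncestor ρ X' v → v ≠ u → ¬ G.Reaches u v

/-- Delete a vertex together with all incident arcs. -/
noncomputable def deleteVertex (G : Digraph' α) (w : α) : Digraph' α :=
  ⟨G.V.erase w, G.E.filter (fun e => e.1 ≠ w ∧ e.2 ≠ w)⟩

/-- `G'` is obtained from `G` by suppressing the in-degree-one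
out-degree-one vertex `w` (replacing `(p,w)`, `(w,c)` by the arc `(p,c)`). -/
def Suppress (G : Digraph' α) (w : α) (G' : Digraph' α) : Prop :=
  G.inDeg w = 1 ∧ G.outDeg w = 1 ∧
  ∃ p c, (p, w) ∈ G.E ∧ (w, c) ∈ G.E ∧
    G'.V = G.V.erase w ∧ G'.E = (G.deleteVertex w).E + {(p, c)}

/-- `G'` is obtained from `G` by deleting exactly one arc of a pair of
parallel arcs. -/
def DeleteParallel (G G' : Digraph' α) : Prop :=
  ∃ e : α × α, 2 ≤ G.E.count e ∧ G'.V = G.V ∧ G'.E = G.E.erase e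

/-- One simplification step: suppress a degree-(1,1) vertex or delete a
parallel arc. -/
def SimpStep (G G' : Digraph' α) : Prop :=
  (∃ w, G.Suppress w G') ∨ G.DeleteParallel G'

/-- `G'` is the full simplification of `G`. -/
def FullSimp (G G' : Digraph' α) : Prop :=
  Relation.ReflTransGen (SimpStep (α := α)) G G' ∧ ∀ G'', ¬ SimpStep G' G''

/-- The path graph of `G` on `A` (w.r.t. the vertex `r`): all vertices and
arcs lying on a directed path from `r` to a leaf in `A`. -/
noncomputable def pathGraph (G : Digraph' α) (r : α) (A : Finset α) : Digraph' α :=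
  ⟨G.V.filter (fun v => ∃ x ∈ A, ∃ p, G.PathFrom r x p ∧ v ∈ p),
   G.E.filter (fun e => ∃ x ∈ A, ∃ p, G.PathFrom r x p ∧ e ∈ p.zip p.tail)⟩

/-- Isomorphism of digraphs fixing every element of `A`. -/
def IsoOn (G1 G2 : Digraph' α) (A : Finset α) : Prop :=
  ∃ φ : α → α, Set.BijOn φ ↑G1.V ↑G2.V ∧ (∀ x ∈ A, φ x = x) ∧
    G2.E = G1.E.map (fun e => (φ e.1, φ e.2))

end Digraph'

/-- A rooted binary phylogenetic network on the leaf set `X`. -/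
structure PhyloNet (α : Type*) where
  G : Digraph' α
  root : α
  X : Finset α
  root_mem : root ∈ G.V
  wf : ∀ e ∈ G.E, e.1 ∈ G.V ∧ e.2 ∈ G.V
  noParallel : ∀ e : α × α, G.E.count e ≤ 1
  acyclic : G.Acyclic
  reach : ∀ v ∈ G.V, G.Reaches root v
  binary :
    (G.V = {root} ∧ G.E = 0 ∧ X = {root}) ∨
    (G.inDeg root = 0 ∧ G.outDeg root = 2 ∧
     (∀ x ∈ X, x ∈ G.V ∧ G.inDeg x = 1 ∧ G.outDeg x = 0) ∧
     (∀ v ∈ G.V, G.outDeg v = 0 → v ∈ X) ∧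
     (∀ v ∈ G.V, v ≠ root → v ∉ X →
       (G.inDeg v = 1 ∧ G.outDeg v = 2) ∨ (G.inDeg v = 2 ∧ G.outDeg v = 1)))

namespace PhyloNet

variable {α : Type*} [DecidableEq α]

/-- `N` is recoverable: the root is the only stable ancestor of `X`. -/
def Recoverable (N : PhyloNet α) : Prop :=
  ∀ v, N.G.StableAncestor N.root N.X v → v = N.root

/-- `{a, b}` is a cherry: two distinct leaves with a common parent. -/
def Cherry (N : PhyloNet α) (a b : α) : Prop :=
  a ∈ N.X ∧ b ∈ N.X ∧ a ≠ b ∧ ∃ p, (p, a) ∈ N.G.E ∧ (p, b) ∈ N.G.E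

/-- `(a, b)` is a reticulated cherry: leaves `a, b` whose parents `p_a, p_b`
satisfy that `(p_a, p_b)` is an arc and `p_b` is a reticulation. -/
def RetCherry (N : PhyloNet α) (a b : α) : Prop :=
  a ∈ N.X ∧ b ∈ N.X ∧ a ≠ b ∧
  ∃ pa pb, (pa, a) ∈ N.G.E ∧ (pb, b) ∈ N.G.E ∧ (pa, pb) ∈ N.G.E ∧
    N.G.inDeg pb = 2

/-- `N'` is obtained from `N` by reducing the leaf `b` of the cherry `{a, b}`:
delete `b` and its incident arc and suppress the resulting degree-two
vertex (or, if the common parent is the root, replace `N` by the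
single-vertex network on `a`). -/
def ReduceCherry (N : PhyloNet α) (a b : α) (N' : PhyloNet α) : Prop :=
  N.Cherry a b ∧ N'.X = N.X.erase b ∧
  ∃ p, (p, a) ∈ N.G.E ∧ (p, b) ∈ N.G.E ∧
    ((p = N.root ∧ N'.G.V = {a} ∧ N'.G.E = 0 ∧ N'.root = a) ∨
     (p ≠ N.root ∧ N'.root = N.root ∧ (N.G.deleteVertex b).Suppress p N'.G))

/-- `N'` is obtained from `N` by cutting the reticulated cherry `(a, b)`:
delete the reticulation arc `(p_a, p_b)` and suppress the two resulting
degree-two vertices. -/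
def CutRetCherry (N : PhyloNet α) (a b : α) (N' : PhyloNet α) : Prop :=
  a ∈ N.X ∧ b ∈ N.X ∧ a ≠ b ∧ N'.X = N.X ∧ N'.root = N.root ∧
  ∃ pa pb, (pa, a) ∈ N.G.E ∧ (pb, b) ∈ N.G.E ∧ (pa, pb) ∈ N.G.E ∧
    N.G.inDeg pb = 2 ∧
    ∃ G1 : Digraph' α, G1.V = N.G.V ∧ G1.E = N.G.E.erase (pa, pb) ∧
      ∃ G2 : Digraph' α, G1.Suppress pa G2 ∧ G2.Suppress pb N'.G

/-- One cherry-picking step: reduce a leaf of a cherry or cut a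
reticulated cherry. -/
def PickStep (N N' : PhyloNet α) : Prop :=
  (∃ a b, N.ReduceCherry a b N') ∨ (∃ a b, N.CutRetCherry a b N')

/-- `N` is an orchard network: some sequence of cherry-picking operations
reduces it to a single vertex. -/
def IsOrchard (N : PhyloNet α) : Prop :=
  ∃ M : PhyloNet α, Relation.ReflTransGen (PickStep (α := α)) N M ∧ M.G.V.card = 1

/-- `H` is the network exhibited by `N` on `A`: the full simplification of
the path graph of `N` on `A`, rooted at the lowest stable ancestor of `A`. -/
def Exhibits (N : PhyloNet α) (A : Finset α) (H : Digraph' α) : Prop :=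
  ∃ r, N.G.IsLowestSA N.root A r ∧ Digraph'.FullSimp (N.G.pathGraph r A) H

end PhyloNet

private lemma chain'_iff_zip {α : Type*} {R : α → α → Prop} :
    ∀ l : List α, l.Chain' R ↔ ∀ e ∈ l.zip l.tail, R e.1 e.2
  | [] => by simp [List.Chain']
  | [a] => by simp [List.Chain']
  | a :: b :: l => by
    simp only [List.Chain']
    rw [List.isChain_cons_cons]
    simp only [List.tail_cons, List.zip_cons_cons, List.mem_cons]
    constructor
    · rintro ⟨h1, h2⟩ e (rfl | he)
      · exact h1
      · exact (chain'_iff_zip (b :: l)).1 h2 e he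
    · intro h
      exact ⟨h _ (Or.inl rfl), (chain'_iff_zip (b :: l)).2 fun e he => h e (Or.inr he)⟩

private lemma mem_zip_cons {α : Type*} (a : α) (l : List α) {e : α × α}
    (he : e ∈ l.zip l.tail) : e ∈ (a :: l).zip l := by
  cases l with
  | nil => simp at he
  | cons b l => simp only [List.zip_cons_cons, List.mem_cons]; exact Or.inr he

private lemma mem_zip_append {α : Type*} (s : List α) {l : List α} {e : α × α}
    (he : e ∈ l.zip l.tail) : e ∈ (s ++ l).zip (s ++ l).tail := by
  induction s with
  | nil => exact he
  | cons a s ih => exact mem_zip_cons a _ ih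

/-- if every path from `u` to the leaf `ℓ ∈ A` in the path
graph of `N` on `A` traverses `v`, then every path from `u` to `ℓ` in `N`
traverses `v`. -/
theorem traverses_in_net_of_traverses_in_pathGraph
    {α : Type*} [DecidableEq α] (N : PhyloNet α) (A : Finset α)
    (hA : A ⊆ N.X) (r : α) (hr : N.G.IsLowestSA N.root A r)
    (u v ℓ : α) (hl : ℓ ∈ A)
    (hu : u ∈ (N.G.pathGraph r A).V) (hv : v ∈ (N.G.pathGraph r A).V)
    (h : ∀ p, (N.G.pathGraph r A).PathFrom u ℓ p → v ∈ p) :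
    ∀ p, N.G.PathFrom u ℓ p → v ∈ p := by
  intro p hp
  simp only [Digraph'.pathGraph, Finset.mem_filter] at hu
  obtain ⟨huV, x, hx, q, hq, huq⟩ := hu
  obtain ⟨⟨hpne, hpV, hpch⟩, hphead, hplast⟩ := hp
  obtain ⟨⟨hqne, hqV, hqch⟩, hqhead, hqlast⟩ := hq
  obtain ⟨s, t, rfl⟩ := List.append_of_mem huq
  obtain ⟨p', rfl⟩ : ∃ p', p = u :: p' := by
    cases p with
    | nil => exact absurd rfl hpne
    | cons a p' =>
      simp only [List.head?_cons, Option.some.injEq] at hphead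
      exact ⟨p', by rw [hphead]⟩
  -- boundary facts from the chain of q
  simp only [List.Chain'] at hqch
  rw [List.isChain_append] at hqch
  obtain ⟨hschain, _, hbd⟩ := hqch
  -- the concatenated path q' from r to ℓ
  set q' : List α := s ++ u :: p' with hq'
  have hq'chain : q'.Chain' (fun a b => (a, b) ∈ N.G.E) := by
    simp only [hq', List.Chain']
    rw [List.isChain_append]
    exact ⟨hschain, hpch, fun x hx y hy => by
      simp only [List.head?_cons, Option.mem_def, Option.some.injEq] at hy
      subst hy; exact hbd x hx u (by simp)⟩
  have hq'head : q'.head? = some r := by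
    cases s with
    | nil =>
      simp only [List.nil_append, List.head?_cons] at hqhead ⊢
      exact hqhead
    | cons a s =>
      simp only [List.cons_append, List.head?_cons] at hqhead ⊢
      exact hqhead
  have hq'last : q'.getLast? = some ℓ := by
    rw [hq', List.getLast?_append]
    exact hplast
  have hq'V : ∀ w ∈ q', w ∈ N.G.V := by
    intro w hw
    rcases List.mem_append.1 hw with h1 | h1
    · exact hqV w (by simp [h1])
    · exact hpV w h1
  have hq'path : N.G.PathFrom r ℓ q' :=
    ⟨⟨by simp [hq'], hq'V, hq'chain⟩, hq'head, hq'last⟩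
  -- p is a path in the path graph
  have hpzip : ∀ e ∈ (u :: p').zip p', e ∈ N.G.E := by
    intro e he
    exact (chain'_iff_zip _).1 hpch e (by simpa using he)
  apply h (u :: p')
  refine ⟨⟨hpne, ?_, ?_⟩, hphead, hplast⟩
  · intro w hw
    simp only [Digraph'.pathGraph, Finset.mem_filter]
    exact ⟨hpV w hw, ℓ, hl, q', hq'path, by
      exact List.mem_append.2 (Or.inr hw)⟩
  · rw [chain'_iff_zip]
    intro e he
    simp only [Digraph'.pathGraph, Multiset.mem_filter]
    refine ⟨hpzip e (by simpa using he), ℓ, hl, q', hq'path, ?_⟩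
    exact mem_zip_append s (by simpa using he)
end

section
/- Let N be a rooted binary phylogenetic network on X and let A ⊆ X. If v is a vertex of the exhibited network N_A that is a stable ancestor in N_A of a leaf ℓ ∈ A, then v is a stable ancestor of ℓ in N. -/
open scoped Classical

namespace Digraph'

variable {α : Type*} [DecidableEq α]

/-- Membership in `l.zip l.tail` corresponds to consecutive occurrences. -/
lemma mem_zip_tail_split {l : List α} {a b : α}
    (h : (a, b) ∈ l.zip l.tail) : ∃ s t, l = s ++ a :: b :: t := by
  induction l with
  | nil => simp at h
  | cons x xs ih =>
    cases xs with
    | nil => simp at h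
    | cons y ys =>
      simp only [List.tail_cons, List.zip_cons_cons, List.mem_cons, Prod.mk.injEq] at h
      rcases h with ⟨rfl, rfl⟩ | h
      · exact ⟨[], ys, rfl⟩
      · obtain ⟨s, t, hst⟩ := ih (by simpa using h)
        exact ⟨x :: s, t, by simp [hst]⟩

/-- A chain can be strengthened to record membership in `l.zip l.tail`. -/
lemma chain'_mem_zip {R : α → α → Prop} :
    ∀ {l : List α}, l.Chain' R → l.Chain' (fun a b => R a b ∧ (a, b) ∈ l.zip l.tail) := by
  intro l
  induction l with
  | nil => intro _; simp [List.Chain']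
  | cons x xs ih =>
    intro h
    cases xs with
    | nil => simp [List.Chain']
    | cons y ys =>
      rw [List.Chain', List.isChain_cons_cons] at h
      have h2 := ih h.2
      rw [List.Chain', List.isChain_cons_cons]
      constructor
      · exact ⟨h.1, by simp⟩
      · refine h2.imp ?_
        intro a b hab
        refine ⟨hab.1, ?_⟩
        simp only [List.tail_cons, List.zip_cons_cons, List.mem_cons]
        exact Or.inr hab.2

lemma getLast?_filter_ne {l : List α} {b w : α} (hb : l.getLast? = some b) (hbw : b ≠ w) :
    (l.filter (fun x => x ≠ w)).getLast? = some b := by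
  have heq : l.dropLast ++ [b] = l := List.dropLast_append_getLast? b hb
  rw [← heq, List.filter_append]
  have : List.filter (fun x => decide (x ≠ w)) [b] = [b] := by simp [hbw]
  rw [this, List.getLast?_concat]

lemma inDeg_eq_zero_iff {G : Digraph' α} {v : α} :
    G.inDeg v = 0 ↔ ∀ e ∈ G.E, e.2 ≠ v := by
  rw [inDeg, Multiset.card_eq_zero, Multiset.filter_eq_nil]

lemma outDeg_eq_zero_iff {G : Digraph' α} {v : α} :
    G.outDeg v = 0 ↔ ∀ e ∈ G.E, e.1 ≠ v := by
  rw [outDeg, Multiset.card_eq_zero, Multiset.filter_eq_nil]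

lemma eq_of_inDeg_one {G : Digraph' α} {w u u' : α} (h : G.inDeg w = 1)
    (h1 : (u, w) ∈ G.E) (h2 : (u', w) ∈ G.E) : u = u' := by
  obtain ⟨e, he⟩ := Multiset.card_eq_one.mp h
  have m1 : (u, w) ∈ G.E.filter (fun e => e.2 = w) := Multiset.mem_filter.mpr ⟨h1, rfl⟩
  have m2 : (u', w) ∈ G.E.filter (fun e => e.2 = w) := Multiset.mem_filter.mpr ⟨h2, rfl⟩
  rw [he, Multiset.mem_singleton] at m1 m2
  exact (Prod.ext_iff.mp (m1.trans m2.symm)).1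

lemma eq_of_outDeg_one {G : Digraph' α} {w u u' : α} (h : G.outDeg w = 1)
    (h1 : (w, u) ∈ G.E) (h2 : (w, u') ∈ G.E) : u = u' := by
  obtain ⟨e, he⟩ := Multiset.card_eq_one.mp h
  have m1 : (w, u) ∈ G.E.filter (fun e => e.1 = w) := Multiset.mem_filter.mpr ⟨h1, rfl⟩
  have m2 : (w, u') ∈ G.E.filter (fun e => e.1 = w) := Multiset.mem_filter.mpr ⟨h2, rfl⟩
  rw [he, Multiset.mem_singleton] at m1 m2
  exact (Prod.ext_iff.mp (m1.trans m2.symm)).2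

end Digraph'

namespace Digraph'

variable {α : Type*} [DecidableEq α]

lemma suppress_chain {G G' : Digraph' α} {w pp cc : α}
    (hin : G.inDeg w = 1) (hout : G.outDeg w = 1)
    (hpw : (pp, w) ∈ G.E) (hwc : (w, cc) ∈ G.E)
    (hE : G'.E = (G.deleteVertex w).E + {(pp, cc)}) :
    ∀ n (q : List α), q.length ≤ n → q.Chain' (fun u v => (u, v) ∈ G.E) →
      q.head? ≠ some w → q.getLast? ≠ some w →
      (q.filter (fun x => x ≠ w)).Chain' (fun u v => (u, v) ∈ G'.E) := by
  have hdel : ∀ e : α × α, e ∈ G.E → e.1 ≠ w → e.2 ≠ w → e ∈ G'.E := by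
    intro e he h1 h2
    rw [hE]
    exact Multiset.mem_add.mpr (Or.inl (Multiset.mem_filter.mpr ⟨he, h1, h2⟩))
  have hnew : (pp, cc) ∈ G'.E := by
    rw [hE]; exact Multiset.mem_add.mpr (Or.inr (Multiset.mem_singleton_self _))
  intro n
  induction n with
  | zero =>
    intro q hq _ _ _
    have : q = [] := List.length_eq_zero_iff.mp (Nat.le_zero.mp hq)
    subst this; simp [List.Chain']
  | succ n ih =>
    intro q hlen hch hhd htl
    match q with
    | [] => simp [List.Chain']
    | [a] =>
      have haw : a ≠ w := by intro h; exact hhd (by simp [h])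
      simp [haw, List.Chain']
    | a :: b :: rest =>
      have haw : a ≠ w := by intro h; exact hhd (by simp [h])
      have hab : (a, b) ∈ G.E := hch.rel_head
      by_cases hbw : b = w
      · -- b = w : a = pp, next is cc
        have hab' : (a, w) ∈ G.E := by rwa [hbw] at hab
        have hap : a = pp := eq_of_inDeg_one hin hab' hpw
        match rest with
        | [] => exact absurd (by simp [hbw]) htl
        | c' :: rest' =>
          have hwc0 : (b, c') ∈ G.E := (List.isChain_cons_cons.mp ((List.isChain_cons_cons.mp hch).2)).1
          have hwc' : (w, c') ∈ G.E := by rwa [hbw] at hwc0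
          have hc'c : c' = cc := eq_of_outDeg_one hout hwc' hwc
          have hcw : c' ≠ w := by
            intro h
            apply haw
            have h2 : (w, w) ∈ G.E := by rw [h] at hwc'; exact hwc'
            exact eq_of_inDeg_one hin hab' h2
          have hrest : (List.filter (fun x => decide (x ≠ w)) (c' :: rest')).Chain'
              (fun u v => (u, v) ∈ G'.E) := by
            refine ih (c' :: rest') ?_ ?_ ?_ ?_
            · have := hlen; simp at this ⊢; omega
            · exact ((List.isChain_cons_cons.mp ((List.isChain_cons_cons.mp hch).2)).2)
            · simp [hcw]
            · simpa using htl
          have hfil : List.filter (fun x => decide (x ≠ w)) (a :: b :: c' :: rest')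
              = a :: c' :: List.filter (fun x => decide (x ≠ w)) rest' := by
            simp [List.filter_cons, haw, hcw, hbw]
          rw [show ((a :: b :: c' :: rest').filter (fun x => x ≠ w))
              = a :: c' :: List.filter (fun x => decide (x ≠ w)) rest' from hfil]
          rw [List.Chain', List.isChain_cons_cons]
          refine ⟨hap ▸ hc'c ▸ hnew, ?_⟩
          have : List.filter (fun x => decide (x ≠ w)) (c' :: rest')
              = c' :: List.filter (fun x => decide (x ≠ w)) rest' := by
            simp [List.filter_cons, hcw]
          rwa [this] at hrest
      · -- b ≠ w
        have hrest : (List.filter (fun x => decide (x ≠ w)) (b :: rest)).Chain'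
            (fun u v => (u, v) ∈ G'.E) := by
          refine ih (b :: rest) ?_ (List.isChain_cons_cons.mp hch).2 (by simp [hbw]) ?_
          · have := hlen; simp at this ⊢; omega
          · simpa using htl
        have hfil : List.filter (fun x => decide (x ≠ w)) (a :: b :: rest)
            = a :: b :: List.filter (fun x => decide (x ≠ w)) rest := by
          simp [List.filter_cons, haw, hbw]
        rw [show ((a :: b :: rest).filter (fun x => x ≠ w))
            = a :: b :: List.filter (fun x => decide (x ≠ w)) rest from hfil]
        rw [List.Chain', List.isChain_cons_cons]
        refine ⟨hdel _ hab haw hbw, ?_⟩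
        have : List.filter (fun x => decide (x ≠ w)) (b :: rest)
            = b :: List.filter (fun x => decide (x ≠ w)) rest := by
          simp [List.filter_cons, hbw]
        rwa [this] at hrest

end Digraph'

namespace Digraph'

variable {α : Type*} [DecidableEq α]

lemma head?_filter_ne {t : List α} {a w : α} (haw : a ≠ w) :
    ((a :: t).filter (fun x => x ≠ w)).head? = some a := by
  simp [List.filter_cons, haw]

lemma pathFrom_suppress {G G' : Digraph' α} {w : α} (h : G.Suppress w G')
    {r l : α} {q : List α} (hq : G.PathFrom r l q) (hr : r ≠ w) (hl : l ≠ w) :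
    ∃ q', G'.PathFrom r l q' ∧ ∀ x ∈ q', x ∈ q := by
  obtain ⟨hin, hout, pp, cc, hpw, hwc, hV, hE⟩ := h
  obtain ⟨⟨hne, hvert, hch⟩, hhd, htl⟩ := hq
  refine ⟨q.filter (fun x => x ≠ w), ⟨⟨?_, ?_, ?_⟩, ?_, ?_⟩, ?_⟩
  · -- nonempty
    intro hnil
    have : l ∈ q.filter (fun x => x ≠ w) := by
      refine List.mem_filter.mpr ⟨?_, by simpa using hl⟩
      have hd := List.dropLast_append_getLast? l htl
      rw [← hd]; simp
    rw [hnil] at this; simp at this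
  · intro x hx
    have hx' := List.mem_filter.mp hx
    rw [hV]
    exact Finset.mem_erase.mpr ⟨by simpa using hx'.2, hvert x hx'.1⟩
  · exact suppress_chain hin hout hpw hwc hE q.length q le_rfl hch
      (by rw [hhd]; simpa using hr) (by rw [htl]; simpa using hl)
  · obtain ⟨t, rfl⟩ : ∃ t, q = r :: t := by
      cases q with
      | nil => simp at hhd
      | cons a t => exact ⟨t, by simpa using (by simpa using hhd : a = r) ▸ rfl⟩
    exact head?_filter_ne hr
  · exact getLast?_filter_ne htl hl
  · intro x hx; exact (List.mem_filter.mp hx).1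

lemma step_inDeg_zero {G G' : Digraph' α} (h : SimpStep G G') {r : α}
    (hr : G.inDeg r = 0) : G'.inDeg r = 0 := by
  rw [inDeg_eq_zero_iff] at hr ⊢
  rcases h with ⟨w, hin, hout, pp, cc, hpw, hwc, hV, hE⟩ | ⟨e0, hc, hV, hE⟩
  · intro e he
    rw [hE] at he
    rcases Multiset.mem_add.mp he with he | he
    · exact hr e (Multiset.mem_filter.mp he).1
    · rw [Multiset.mem_singleton] at he
      subst he
      exact hr (w, cc) hwc
  · intro e he
    rw [hE] at he
    exact hr e (Multiset.mem_of_mem_erase he)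

lemma step_outDeg_zero {G G' : Digraph' α} (h : SimpStep G G') {l : α}
    (hl : G.outDeg l = 0) : G'.outDeg l = 0 := by
  rw [outDeg_eq_zero_iff] at hl ⊢
  rcases h with ⟨w, hin, hout, pp, cc, hpw, hwc, hV, hE⟩ | ⟨e0, hc, hV, hE⟩
  · intro e he
    rw [hE] at he
    rcases Multiset.mem_add.mp he with he | he
    · exact hl e (Multiset.mem_filter.mp he).1
    · rw [Multiset.mem_singleton] at he
      subst he
      exact hl (pp, w) hpw
  · intro e he
    rw [hE] at he
    exact hl e (Multiset.mem_of_mem_erase he)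

lemma step_path {G G' : Digraph' α} (h : SimpStep G G') {r l : α}
    (hr : G.inDeg r = 0) (hl : G.outDeg l = 0) {q : List α} (hq : G.PathFrom r l q) :
    ∃ q', G'.PathFrom r l q' ∧ ∀ x ∈ q', x ∈ q := by
  rcases h with ⟨w, hsup⟩ | ⟨e0, hc, hV, hE⟩
  · have hrw : r ≠ w := by
      intro heq; rw [heq] at hr; exact one_ne_zero (hsup.1.symm.trans hr)
    have hlw : l ≠ w := by
      intro heq; rw [heq] at hl; exact one_ne_zero (hsup.2.1.symm.trans hl)
    exact pathFrom_suppress hsup hq hrw hlw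
  · refine ⟨q, ⟨⟨hq.1.1, ?_, ?_⟩, hq.2.1, hq.2.2⟩, fun x hx => hx⟩
    · intro x hx; rw [hV]; exact hq.1.2.1 x hx
    · refine hq.1.2.2.imp ?_
      intro a b hab
      rw [hE]
      by_cases hab0 : (a, b) = e0
      · subst hab0
        rw [← Multiset.count_pos, Multiset.count_erase_self]
        omega
      · exact (Multiset.mem_erase_of_ne hab0).mpr hab

lemma rtg_inDeg_zero {G H : Digraph' α} (h : Relation.ReflTransGen SimpStep G H)
    {r : α} (hr : G.inDeg r = 0) : H.inDeg r = 0 := by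
  induction h with
  | refl => exact hr
  | tail _ step ih => exact step_inDeg_zero step ih

lemma rtg_outDeg_zero {G H : Digraph' α} (h : Relation.ReflTransGen SimpStep G H)
    {l : α} (hl : G.outDeg l = 0) : H.outDeg l = 0 := by
  induction h with
  | refl => exact hl
  | tail _ step ih => exact step_outDeg_zero step ih

lemma rtg_path {G H : Digraph' α} (h : Relation.ReflTransGen SimpStep G H)
    {r l : α} (hr : G.inDeg r = 0) (hl : G.outDeg l = 0) {q : List α}
    (hq : G.PathFrom r l q) : ∃ q', H.PathFrom r l q' ∧ ∀ x ∈ q', x ∈ q := by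
  induction h with
  | refl => exact ⟨q, hq, fun x hx => hx⟩
  | tail hGM step ih =>
    obtain ⟨q', hq', hsub⟩ := ih
    obtain ⟨q'', hq'', hsub'⟩ :=
      step_path step (rtg_inDeg_zero hGM hr) (rtg_outDeg_zero hGM hl) hq'
    exact ⟨q'', hq'', fun x hx => hsub _ (hsub' _ hx)⟩

end Digraph'

namespace Digraph'

variable {α : Type*} [DecidableEq α]

lemma reaches_of_mem_zip {G : Digraph' α} {r x : α} {p' : List α} (hp : G.PathFrom r x p')
    {u v : α} (huv : (u, v) ∈ p'.zip p'.tail) : G.Reaches r u := by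
  obtain ⟨s, t, heq⟩ := mem_zip_tail_split huv
  subst heq
  refine ⟨s ++ [u], ⟨⟨by simp, ?_, ?_⟩, ?_, List.getLast?_concat⟩⟩
  · intro y hy
    refine hp.1.2.1 y ?_
    simp only [List.mem_append, List.mem_cons, List.mem_singleton] at hy ⊢
    tauto
  · exact hp.1.2.2.prefix ⟨v :: t, by simp⟩
  · have h := hp.2.1
    rw [show s ++ u :: v :: t = (s ++ [u]) ++ (v :: t) by simp] at h
    rw [List.head?_append] at h
    cases hh : (s ++ [u]).head? with
    | none => exact absurd (List.head?_eq_none_iff.mp hh) (by simp)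
    | some y => rw [hh] at h; simpa using h

lemma pathGraph_inDeg_root {G : Digraph' α} (hac : G.Acyclic) (r : α) (A : Finset α) :
    (G.pathGraph r A).inDeg r = 0 := by
  rw [inDeg_eq_zero_iff]
  rintro ⟨u, w⟩ he hw
  simp only at hw
  simp only [pathGraph] at he
  obtain ⟨he0, x, hx, p', hp', hzip⟩ := Multiset.mem_filter.mp he
  exact hac (u, w) he0 (by rw [hw]; exact reaches_of_mem_zip hp' hzip)

lemma pathGraph_outDeg_le {G : Digraph' α} (r : α) (A : Finset α) (l : α) :
    (G.pathGraph r A).outDeg l ≤ G.outDeg l :=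
  Multiset.card_le_card (Multiset.filter_le_filter _ (Multiset.filter_le _ _))

lemma pathGraph_path {G : Digraph' α} {r : α} {A : Finset α} {x : α} (hx : x ∈ A)
    {q : List α} (hq : G.PathFrom r x q) : (G.pathGraph r A).PathFrom r x q := by
  obtain ⟨⟨hne, hvert, hch⟩, hhd, htl⟩ := hq
  refine ⟨⟨hne, ?_, ?_⟩, hhd, htl⟩
  · intro y hy
    simp only [pathGraph]
    exact Finset.mem_filter.mpr ⟨hvert y hy, x, hx, q, ⟨⟨hne, hvert, hch⟩, hhd, htl⟩, hy⟩
  · refine (chain'_mem_zip hch).imp ?_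
    intro a b hab
    simp only [pathGraph]
    exact Multiset.mem_filter.mpr ⟨hab.1, x, hx, q, ⟨⟨hne, hvert, hch⟩, hhd, htl⟩, hab.2⟩

end Digraph'

/-- a vertex of the exhibited network `N_A` that is a stable
ancestor of a leaf `ℓ ∈ A` in `N_A` is a stable ancestor of `ℓ` in `N`. -/
theorem stableAncestor_of_stableAncestor_exhibited
    {α : Type*} [DecidableEq α] (N : PhyloNet α) (A : Finset α)
    (hA : A ⊆ N.X) (r : α) (H : Digraph' α)
    (hr : N.G.IsLowestSA N.root A r)
    (hH : Digraph'.FullSimp (N.G.pathGraph r A) H)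
    (v ℓ : α) (hl : ℓ ∈ A) (hv : v ∈ H.V)
    (hsa : H.StableAncestor r {ℓ} v) :
    N.G.StableAncestor N.root {ℓ} v := by
  have hout : N.G.outDeg ℓ = 0 := by
    rcases N.binary with ⟨_, hE0, _⟩ | ⟨_, _, hleaf, _, _⟩
    · rw [Digraph'.outDeg, hE0]; simp
    · have h0 := (hleaf ℓ (hA hl)).2.2
      convert h0 using 2
  have houtP : (N.G.pathGraph r A).outDeg ℓ = 0 :=
    Nat.le_zero.mp (hout ▸ Digraph'.pathGraph_outDeg_le r A ℓ)
  have hinP : (N.G.pathGraph r A).inDeg r = 0 :=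
    Digraph'.pathGraph_inDeg_root N.acyclic r A
  intro x hx p0 hp0
  rw [Finset.mem_singleton] at hx
  subst hx
  have hrmem : r ∈ p0 := hr.1 x hl p0 hp0
  obtain ⟨s, t, rfl⟩ := List.append_of_mem hrmem
  have hq : N.G.PathFrom r x (r :: t) := by
    refine ⟨⟨by simp, ?_, hp0.1.2.2.suffix ⟨s, rfl⟩⟩, rfl, ?_⟩
    · intro y hy; exact hp0.1.2.1 y (by simp [hy])
    · have h := hp0.2.2
      rwa [List.getLast?_append_of_ne_nil s (by simp)] at h
  have hqP := Digraph'.pathGraph_path hl hq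
  obtain ⟨qH, hqH, hsub⟩ := Digraph'.rtg_path hH.1 hinP houtP hqP
  have hv' : v ∈ qH := hsa x (Finset.mem_singleton_self x) qH hqH
  exact List.mem_append.mpr (Or.inr (hsub v hv'))
end

section
/- Let N be a rooted binary phylogenetic network on X, let A ⊆ X, and let v be a tree vertex of N with children c1 and c2. Suppose there exist leaves ℓ1, ℓ2 ∈ A such that ℓ1 is a descendant of c1, ℓ2 is a descendant of c2, and ℓ2 is not a descendant of c1. Then v is a vertex of the exhibited network N_A. -/
open scoped Classical

section AuxLemmas
set_option linter.unusedSectionVars false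

variable {α : Type*} [DecidableEq α]

lemma aux_zip_consec {p : List α} {a b : α} :
    (a, b) ∈ p.zip p.tail ↔ ∃ l1 l2, p = l1 ++ a :: b :: l2 := by
  induction p with
  | nil => simp
  | cons x t ih =>
    cases t with
    | nil =>
      simp only [List.tail_cons, List.zip_nil_right, List.not_mem_nil, false_iff]
      rintro ⟨l1, l2, hl⟩
      cases l1 <;> simp_all
    | cons y s =>
      simp only [List.tail_cons, List.zip_cons_cons, List.mem_cons] at *
      constructor
      · rintro (h | h)
        · obtain ⟨rfl, rfl⟩ : a = x ∧ b = y := by simpa [Prod.ext_iff] using h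
          exact ⟨[], s, rfl⟩
        · obtain ⟨l1, l2, hl⟩ := ih.mp h
          exact ⟨x :: l1, l2, by rw [List.cons_append, ← hl]⟩
      · rintro ⟨l1, l2, hl⟩
        cases l1 with
        | nil =>
          simp only [List.nil_append, List.cons.injEq] at hl
          obtain ⟨rfl, rfl, rfl⟩ := hl
          exact Or.inl rfl
        | cons z l1' =>
          simp only [List.cons_append, List.cons.injEq] at hl
          exact Or.inr (ih.mpr ⟨l1', l2, hl.2⟩)

lemma aux_chain'_consec {R : α → α → Prop} {l1 l2 : List α} {a b : α}
    (h : (l1 ++ a :: b :: l2).Chain' R) : R a b :=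
  (List.isChain_cons_cons.mp (List.isChain_append.mp h).2.1).1

lemma aux_chain'_of_consec {R : α → α → Prop} :
    ∀ {p : List α}, (∀ a b l1 l2, p = l1 ++ a :: b :: l2 → R a b) → p.Chain' R := by
  intro p
  induction p with
  | nil => intro _; simp [List.Chain']
  | cons x t ih =>
    intro h
    cases t with
    | nil => simp [List.Chain']
    | cons y s =>
      refine List.isChain_cons_cons.mpr ⟨h x y [] s rfl, ih ?_⟩
      intro a b l1 l2 hl
      exact h a b (x :: l1) l2 (by rw [List.cons_append, ← hl])

/-- A single reachability step. -/
def AuxStp (G : Digraph' α) (a b : α) : Prop := (a, b) ∈ G.E ∧ b ∈ G.V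

/-- Reachability as a reflexive-transitive closure. -/
def AuxRch (G : Digraph' α) (a b : α) : Prop := Relation.ReflTransGen (AuxStp G) a b

lemma aux_pathFrom_rch {G : Digraph' α} {p : List α} :
    ∀ {x y : α}, G.PathFrom x y p → AuxRch G x y := by
  induction p with
  | nil => rintro x y ⟨⟨hne, -, -⟩, -, -⟩; exact absurd rfl hne
  | cons u t ih =>
    rintro x y ⟨⟨-, hmem, hch⟩, hh, hl⟩
    obtain rfl : u = x := by simpa using hh
    cases t with
    | nil =>
      obtain rfl : u = y := by simpa using hl
      exact Relation.ReflTransGen.refl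
    | cons z s =>
      rw [List.getLast?_cons_cons] at hl
      have h2 : AuxRch G z y := ih ⟨⟨by simp, fun w hw => hmem w (List.mem_cons_of_mem _ hw),
        (List.isChain_cons_cons.mp hch).2⟩, rfl, hl⟩
      exact Relation.ReflTransGen.head ⟨(List.isChain_cons_cons.mp hch).1, hmem z (by simp)⟩ h2

lemma aux_pathFrom_snoc {G : Digraph' α} {x b c : α} {p : List α}
    (h : G.PathFrom x b p) (harc : (b, c) ∈ G.E) (hc : c ∈ G.V) :
    G.PathFrom x c (p ++ [c]) := by
  obtain ⟨⟨hne, hmem, hch⟩, hh, hl⟩ := h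
  refine ⟨⟨by simp, ?_, ?_⟩, ?_, List.getLast?_concat⟩
  · intro u hu
    rcases List.mem_append.mp hu with h | h
    · exact hmem u h
    · have hw : u = c := List.mem_singleton.mp h
      rw [hw]; exact hc
  · refine List.isChain_append.mpr ⟨hch, by simp, ?_⟩
    intro a ha b' hb'
    rw [hl] at ha
    simp only [Option.mem_def, Option.some.injEq, List.head?_cons] at ha hb'
    subst ha; subst hb'; exact harc
  · cases p with
    | nil => exact absurd rfl hne
    | cons a t => simpa using hh

lemma aux_rch_pathFrom {G : Digraph' α} {x y : α} (hx : x ∈ G.V) (h : AuxRch G x y) :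
    G.Reaches x y := by
  induction h with
  | refl => exact ⟨[x], ⟨⟨by simp, by simpa, by simp [List.Chain']⟩, rfl, rfl⟩⟩
  | tail h1 h2 ih =>
    obtain ⟨p, hp⟩ := ih
    exact ⟨p ++ [_], aux_pathFrom_snoc hp h2.1 h2.2⟩

lemma aux_reaches_iff {G : Digraph' α} {x y : α} :
    G.Reaches x y ↔ x ∈ G.V ∧ AuxRch G x y := by
  constructor
  · rintro ⟨p, hp⟩
    exact ⟨hp.1.2.1 x (List.mem_of_mem_head? (by rw [hp.2.1]; rfl)), aux_pathFrom_rch hp⟩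
  · rintro ⟨h1, h2⟩
    exact aux_rch_pathFrom h1 h2

lemma aux_reaches_trans {G : Digraph' α} {x y z : α}
    (h1 : G.Reaches x y) (h2 : G.Reaches y z) : G.Reaches x z := by
  rw [aux_reaches_iff] at *
  exact ⟨h1.1, h1.2.trans h2.2⟩

lemma aux_pathFrom_pre {G : Digraph' α} {x y u : α} {p : List α}
    (h : G.PathFrom x y p) (hu : u ∈ p) : ∃ q, G.PathFrom x u q := by
  obtain ⟨l1, l2, rfl⟩ := List.append_of_mem hu
  obtain ⟨⟨hne, hmem, hch⟩, hh, hl⟩ := h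
  refine ⟨l1 ++ [u], ⟨by simp, ?_, ?_⟩, ?_, List.getLast?_concat⟩
  · intro w hw
    rcases List.mem_append.mp hw with h | h
    · exact hmem w (List.mem_append.mpr (Or.inl h))
    · have hw' : w = u := List.mem_singleton.mp h
      rw [hw']; exact hmem u hu
  · exact hch.prefix ⟨l2, by simp⟩
  · cases l1 with
    | nil => simpa using hh
    | cons a t => simpa using hh

lemma aux_pathFrom_suf {G : Digraph' α} {x y u : α} {p : List α}
    (h : G.PathFrom x y p) (hu : u ∈ p) : ∃ q, G.PathFrom u y q := by
  obtain ⟨l1, l2, rfl⟩ := List.append_of_mem hu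
  obtain ⟨⟨hne, hmem, hch⟩, hh, hl⟩ := h
  refine ⟨u :: l2, ⟨by simp, ?_, ?_⟩, rfl, ?_⟩
  · intro w hw
    exact hmem w (List.mem_append.mpr (Or.inr hw))
  · exact hch.suffix ⟨l1, rfl⟩
  · rw [List.getLast?_append_of_ne_nil _ (by simp : u :: l2 ≠ [])] at hl
    exact hl

lemma aux_pathFrom_link {G : Digraph' α} {x u u' y : α} {p q : List α}
    (hp : G.PathFrom x u p) (hq : G.PathFrom u' y q) (harc : (u, u') ∈ G.E) :
    G.PathFrom x y (p ++ q) ∧ ∃ l1 l2, p ++ q = l1 ++ u :: u' :: l2 := by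
  obtain ⟨⟨hne, hmem, hch⟩, hh, hl⟩ := hp
  obtain ⟨⟨hne', hmem', hch'⟩, hh', hl'⟩ := hq
  have hpd : p.dropLast ++ [u] = p := List.dropLast_append_getLast? u hl
  have hqd : q = u' :: q.tail := by
    cases q with
    | nil => exact absurd rfl hne'
    | cons a t =>
      obtain rfl : a = u' := by simpa using hh'
      rfl
  refine ⟨⟨⟨fun hcon => hne (List.append_eq_nil_iff.mp hcon).1, ?_, ?_⟩, ?_, ?_⟩,
    p.dropLast, q.tail, ?_⟩
  · intro w hw
    rcases List.mem_append.mp hw with h | h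
    exacts [hmem w h, hmem' w h]
  · refine List.isChain_append.mpr ⟨hch, hch', ?_⟩
    intro a ha b hb
    rw [hl] at ha; rw [hh'] at hb
    simp only [Option.mem_def, Option.some.injEq] at ha hb
    subst ha; subst hb; exact harc
  · cases p with
    | nil => exact absurd rfl hne
    | cons a t => simpa using hh
  · rw [List.getLast?_append_of_ne_nil _ hne']; exact hl'
  · calc p ++ q = (p.dropLast ++ [u]) ++ (u' :: q.tail) := by rw [hpd, ← hqd]
      _ = p.dropLast ++ u :: u' :: q.tail := by simp

lemma aux_rch_mono {G G' : Digraph' α} (hV : ∀ a ∈ G.V, a ∈ G'.V)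
    (hE : ∀ e ∈ G.E, e ∈ G'.E) {x y : α} (h : AuxRch G x y) : AuxRch G' x y :=
  Relation.ReflTransGen.mono (r := AuxStp G) (p := AuxStp G') (fun _ _ hab => ⟨hE _ hab.1, hV _ hab.2⟩) _ _ h

lemma aux_two_le_card {β : Type*} [DecidableEq β] {s : Multiset β} {a b : β}
    (ha : a ∈ s) (hb : b ∈ s) (hab : a ≠ b) : 2 ≤ Multiset.card s := by
  obtain ⟨t, rfl⟩ := Multiset.exists_cons_of_mem ha
  have hbt : b ∈ t := by
    rcases Multiset.mem_cons.mp hb with h | h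
    · exact absurd h hab.symm
    · exact h
  have h0 : 0 < Multiset.card t := Multiset.card_pos.mpr (fun h => by simp [h] at hbt)
  rw [Multiset.card_cons]
  omega

end AuxLemmas

section AuxSimp
set_option linter.unusedSectionVars false

variable {α : Type*} [DecidableEq α]

lemma aux_suppress_memE {G G' : Digraph' α} {w p c : α}
    (hE' : G'.E = (G.deleteVertex w).E + {(p, c)}) {e : α × α} :
    e ∈ G'.E ↔ (e ∈ G.E ∧ e.1 ≠ w ∧ e.2 ≠ w) ∨ e = (p, c) := by
  rw [hE']
  simp [Digraph'.deleteVertex, Multiset.mem_filter, Multiset.mem_add]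

lemma aux_in_uniq {G : Digraph' α} {w : α} (h : G.inDeg w = 1) {x p : α}
    (hx : (x, w) ∈ G.E) (hp : (p, w) ∈ G.E) : x = p := by
  by_contra hne
  have h2 : 2 ≤ Multiset.card (G.E.filter (fun e => e.2 = w)) :=
    aux_two_le_card (Multiset.mem_filter.mpr ⟨hx, rfl⟩) (Multiset.mem_filter.mpr ⟨hp, rfl⟩)
      (by simp only [ne_eq, Prod.mk.injEq, not_and]; intro h' _; exact hne h')
  rw [Digraph'.inDeg] at h
  omega

lemma aux_out_uniq {G : Digraph' α} {w : α} (h : G.outDeg w = 1) {x c : α}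
    (hx : (w, x) ∈ G.E) (hc : (w, c) ∈ G.E) : x = c := by
  by_contra hne
  have h2 : 2 ≤ Multiset.card (G.E.filter (fun e => e.1 = w)) :=
    aux_two_le_card (Multiset.mem_filter.mpr ⟨hx, rfl⟩) (Multiset.mem_filter.mpr ⟨hc, rfl⟩)
      (by simp only [ne_eq, Prod.mk.injEq, not_and]; intro _ h'; exact hne h')
  rw [Digraph'.outDeg] at h
  omega

lemma aux_rch_fwd {G G' : Digraph' α} {w : α} (hs : G.Suppress w G')
    (hacy : ∀ e ∈ G.E, ¬ AuxRch G e.2 e.1) {x y : α}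
    (hx : x ≠ w) (hy : y ≠ w) (h : AuxRch G x y) : AuxRch G' x y := by
  obtain ⟨hin, hout, p, c, hpw, hwc, hV', hE'⟩ := hs
  have key : ∀ z, AuxRch G x z → (z ≠ w → AuxRch G' x z) ∧ (z = w → AuxRch G' x p) := by
    intro z hz
    induction hz with
    | refl => exact ⟨fun _ => Relation.ReflTransGen.refl, fun h' => absurd h' hx⟩
    | @tail b z hxb hbz ih =>
      obtain ⟨harc, hzV⟩ := hbz
      by_cases hzw : z = w
      · subst hzw
        refine ⟨fun h' => absurd rfl h', fun _ => ?_⟩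
        have hbp : b = p := aux_in_uniq hin harc hpw
        have hbw : b ≠ z := by
          intro hbw
          exact hacy (b, z) harc (by rw [hbw]; exact Relation.ReflTransGen.refl)
        exact hbp ▸ ih.1 hbw
      · refine ⟨fun _ => ?_, fun h' => absurd h' hzw⟩
        have hzV' : z ∈ G'.V := by rw [hV']; exact Finset.mem_erase.mpr ⟨hzw, hzV⟩
        by_cases hbw : b = w
        · subst hbw
          obtain rfl : z = c := aux_out_uniq hout harc hwc
          have harc' : (p, z) ∈ G'.E := (aux_suppress_memE hE').mpr (Or.inr rfl)
          exact (ih.2 rfl).tail ⟨harc', hzV'⟩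
        · have harc' : (b, z) ∈ G'.E := (aux_suppress_memE hE').mpr (Or.inl ⟨harc, hbw, hzw⟩)
          exact (ih.1 hbw).tail ⟨harc', hzV'⟩
  exact (key y h).1 hy

lemma aux_rch_bwd {G G' : Digraph' α} {w : α} (hs : G.Suppress w G')
    (hwf : ∀ e ∈ G.E, e.1 ∈ G.V ∧ e.2 ∈ G.V) {x y : α} (h : AuxRch G' x y) :
    AuxRch G x y := by
  obtain ⟨hin, hout, p, c, hpw, hwc, hV', hE'⟩ := hs
  induction h with
  | refl => exact Relation.ReflTransGen.refl
  | @tail b z hxb hbz ih =>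
    obtain ⟨harc, hzV⟩ := hbz
    rcases (aux_suppress_memE hE').mp harc with ⟨hE, -, -⟩ | heq
    · refine ih.tail ⟨hE, ?_⟩
      rw [hV'] at hzV
      exact (Finset.mem_erase.mp hzV).2
    · injection heq with h1 h2
      subst h1; subst h2
      exact (ih.tail ⟨hpw, (hwf _ hpw).2⟩).tail ⟨hwc, (hwf _ hwc).2⟩

lemma aux_dp_mem {G G' : Digraph' α} (hd : G.DeleteParallel G') :
    G'.V = G.V ∧ ∀ e' : α × α, e' ∈ G'.E ↔ e' ∈ G.E := by
  obtain ⟨e, hcnt, hV, hE⟩ := hd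
  refine ⟨hV, fun e' => ?_⟩
  rw [hE]
  constructor
  · exact Multiset.mem_of_mem_erase
  · intro h
    by_cases he : e' = e
    · subst he
      rw [← Multiset.count_pos, Multiset.count_erase_self]
      omega
    · exact (Multiset.mem_erase_of_ne he).mpr h

/-- The invariant maintained along simplification. -/
structure AuxInv (G : Digraph' α) (v l1 l2 : α) : Prop where
  wf : ∀ e ∈ G.E, e.1 ∈ G.V ∧ e.2 ∈ G.V
  acy : ∀ e ∈ G.E, ¬ AuxRch G e.2 e.1
  no1 : ∀ x, (l1, x) ∉ G.E
  no2 : ∀ x, (l2, x) ∉ G.E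
  vmem : v ∈ G.V
  wit : ∃ a1 a2, (v, a1) ∈ G.E ∧ (v, a2) ∈ G.E ∧ AuxRch G a1 l1 ∧ AuxRch G a2 l2 ∧
    ¬ AuxRch G a1 l2

lemma aux_wit_upd {G G' : Digraph' α} {w v l : α} (hs : G.Suppress w G')
    (hwf : ∀ e ∈ G.E, e.1 ∈ G.V ∧ e.2 ∈ G.V)
    (hacy : ∀ e ∈ G.E, ¬ AuxRch G e.2 e.1)
    {a : α} (ha : (v, a) ∈ G.E) (hv : v ≠ w) (hl : l ≠ w) (hr : AuxRch G a l) :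
    ∃ a', (v, a') ∈ G'.E ∧ AuxRch G' a' l ∧ ∀ t, AuxRch G' a' t → AuxRch G a t := by
  have hsc := hs
  obtain ⟨hin, hout, p, c, hpw, hwc, hV', hE'⟩ := hs
  by_cases haw : a = w
  · subst haw
    have hvp : v = p := aux_in_uniq hin ha hpw
    have hcne : c ≠ a := by
      intro h
      exact hacy (a, c) hwc (by rw [h]; exact Relation.ReflTransGen.refl)
    rcases hr.cases_head with heq | ⟨z, hz, hr'⟩
    · exact absurd heq (Ne.symm hl)
    · obtain rfl : z = c := aux_out_uniq hout hz.1 hwc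
      refine ⟨z, (aux_suppress_memE hE').mpr (Or.inr (by rw [hvp])), ?_, ?_⟩
      · exact aux_rch_fwd hsc hacy hcne hl hr'
      · intro t ht
        exact Relation.ReflTransGen.head ⟨hwc, (hwf _ hwc).2⟩ (aux_rch_bwd hsc hwf ht)
  · exact ⟨a, (aux_suppress_memE hE').mpr (Or.inl ⟨ha, hv, haw⟩),
      aux_rch_fwd hsc hacy haw hl hr, fun t ht => aux_rch_bwd hsc hwf ht⟩

lemma aux_inv_step {G G' : Digraph' α} {v l1 l2 : α}
    (hI : AuxInv G v l1 l2) (hstep : Digraph'.SimpStep G G') : AuxInv G' v l1 l2 := by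
  obtain ⟨hwf, hacy, hno1, hno2, hvmem, a1, a2, ha1, ha2, hr1, hr2, hnr⟩ := hI
  have ha12 : a1 ≠ a2 := fun h => hnr (h ▸ hr2)
  rcases hstep with ⟨w, hs⟩ | hd
  · have hsc := hs
    obtain ⟨hin, hout, p, c, hpw, hwc, hV', hE'⟩ := hs
    have hvw : v ≠ w := by
      intro h
      subst h
      have h2 : 2 ≤ Multiset.card (G.E.filter (fun e => e.1 = v)) :=
        aux_two_le_card (Multiset.mem_filter.mpr ⟨ha1, rfl⟩)
          (Multiset.mem_filter.mpr ⟨ha2, rfl⟩)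
          (by simp only [ne_eq, Prod.mk.injEq, not_and]; intro _ h'; exact ha12 h')
      rw [Digraph'.outDeg] at hout
      omega
    have hpne : p ≠ w := by
      intro h
      exact hacy (p, w) hpw (by rw [h]; exact Relation.ReflTransGen.refl)
    have hcne : c ≠ w := by
      intro h
      exact hacy (w, c) hwc (by rw [h]; exact Relation.ReflTransGen.refl)
    have hl1w : l1 ≠ w := fun h => hno1 c (h ▸ hwc)
    have hl2w : l2 ≠ w := fun h => hno2 c (h ▸ hwc)
    have hwV : w ∈ G.V := (hwf _ hpw).2
    obtain ⟨a1', h1a, h1r, h1b⟩ := aux_wit_upd hsc hwf hacy ha1 hvw hl1w hr1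
    obtain ⟨a2', h2a, h2r, h2b⟩ := aux_wit_upd hsc hwf hacy ha2 hvw hl2w hr2
    refine ⟨?_, ?_, ?_, ?_, ?_, a1', a2', h1a, h2a, h1r, h2r,
      fun hcon => hnr (h1b l2 hcon)⟩
    · rintro ⟨e1, e2⟩ he
      rcases (aux_suppress_memE hE').mp he with ⟨hE, hne1, hne2⟩ | heq
      · constructor
        · rw [hV']; exact Finset.mem_erase.mpr ⟨hne1, (hwf _ hE).1⟩
        · rw [hV']; exact Finset.mem_erase.mpr ⟨hne2, (hwf _ hE).2⟩
      · injection heq with h1 h2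
        subst h1; subst h2
        constructor
        · rw [hV']; exact Finset.mem_erase.mpr ⟨hpne, (hwf _ hpw).1⟩
        · rw [hV']; exact Finset.mem_erase.mpr ⟨hcne, (hwf _ hwc).2⟩
    · rintro ⟨e1, e2⟩ he hrch
      have hrch' : AuxRch G e2 e1 := aux_rch_bwd hsc hwf hrch
      rcases (aux_suppress_memE hE').mp he with ⟨hE, -, -⟩ | heq
      · exact hacy _ hE hrch'
      · injection heq with h1 h2
        rw [h1, h2] at hrch'
        exact hacy (w, c) hwc (hrch'.tail ⟨hpw, hwV⟩)
    · intro x hx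
      rcases (aux_suppress_memE hE').mp hx with ⟨hE, -, -⟩ | heq
      · exact hno1 x hE
      · injection heq with h1 h2
        exact hno1 w (h1 ▸ hpw)
    · intro x hx
      rcases (aux_suppress_memE hE').mp hx with ⟨hE, -, -⟩ | heq
      · exact hno2 x hE
      · injection heq with h1 h2
        exact hno2 w (h1 ▸ hpw)
    · rw [hV']; exact Finset.mem_erase.mpr ⟨hvw, hvmem⟩
  · obtain ⟨hVeq, hEiff⟩ := aux_dp_mem hd
    have hF : ∀ {x y : α}, AuxRch G x y → AuxRch G' x y :=
      fun h => aux_rch_mono (fun a ha => hVeq ▸ ha) (fun e he => (hEiff e).mpr he) h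
    have hB : ∀ {x y : α}, AuxRch G' x y → AuxRch G x y :=
      fun h => aux_rch_mono (fun a ha => hVeq ▸ ha) (fun e he => (hEiff e).mp he) h
    refine ⟨?_, ?_, ?_, ?_, ?_, a1, a2, (hEiff _).mpr ha1, (hEiff _).mpr ha2,
      hF hr1, hF hr2, fun h => hnr (hB h)⟩
    · intro e he
      rw [hVeq]
      exact hwf e ((hEiff e).mp he)
    · exact fun e he h => hacy e ((hEiff e).mp he) (hB h)
    · exact fun x hx => hno1 x ((hEiff _).mp hx)
    · exact fun x hx => hno2 x ((hEiff _).mp hx)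
    · rw [hVeq]; exact hvmem

lemma aux_inv_rtg {G H : Digraph' α} {v l1 l2 : α}
    (h : Relation.ReflTransGen (Digraph'.SimpStep (α := α)) G H)
    (hI : AuxInv G v l1 l2) : AuxInv H v l1 l2 := by
  induction h with
  | refl => exact hI
  | tail h1 h2 ih => exact aux_inv_step ih h2

end AuxSimp

/-- a tree vertex `v` with children `c1, c2` such that some
`ℓ1 ∈ A` is a descendant of `c1`, some `ℓ2 ∈ A` is a descendant of `c2`,
and `ℓ2` is not a descendant of `c1`, is a vertex of `N_A`. -/
theorem tree_vertex_mem_exhibited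
    {α : Type*} [DecidableEq α] (N : PhyloNet α) (A : Finset α)
    (hA : A ⊆ N.X) (v c1 c2 : α)
    (htree : N.G.inDeg v = 1 ∧ N.G.outDeg v = 2)
    (hc1 : (v, c1) ∈ N.G.E) (hc2 : (v, c2) ∈ N.G.E) (hcc : c1 ≠ c2)
    (ℓ1 ℓ2 : α) (h1 : ℓ1 ∈ A) (h2 : ℓ2 ∈ A)
    (hd1 : N.G.Reaches c1 ℓ1) (hd2 : N.G.Reaches c2 ℓ2)
    (hnd : ¬ N.G.Reaches c1 ℓ2)
    (H : Digraph' α) (hH : N.Exhibits A H) :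
    v ∈ H.V := by
  obtain ⟨r, hLSA, hFS⟩ := hH
  obtain ⟨hrSA, -⟩ := hLSA
  obtain ⟨hrtg, -⟩ := hFS
  have hvV : v ∈ N.G.V := (N.wf _ hc1).1
  have hc1V : c1 ∈ N.G.V := (N.wf _ hc1).2
  -- leaves are vertices
  have hXV : ∀ x ∈ N.X, x ∈ N.G.V := by
    intro x hx
    rcases N.binary with ⟨hV1, -, hX1⟩ | ⟨-, -, hX, -, -⟩
    · rw [hX1] at hx
      rw [Finset.mem_singleton] at hx
      rw [hx]
      exact N.root_mem
    · exact (hX x hx).1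
  -- leaves have no outgoing arcs
  have hXout : ∀ x ∈ N.X, ∀ z, (x, z) ∉ N.G.E := by
    intro x hx z hz
    rcases N.binary with ⟨-, hE1, -⟩ | ⟨-, -, hX, -, -⟩
    · rw [hE1] at hz
      exact Multiset.notMem_zero _ hz
    · have h0 : N.G.outDeg x = 0 := by
        have h' := (hX x hx).2.2
        convert h' using 2
      rw [Digraph'.outDeg, Multiset.card_eq_zero] at h0
      have : (x, z) ∈ N.G.E.filter (fun e => e.1 = x) := Multiset.mem_filter.mpr ⟨hz, rfl⟩
      rw [h0] at this
      exact Multiset.notMem_zero _ this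
  obtain ⟨q1, hq1⟩ := hd1
  obtain ⟨q2, hq2⟩ := hd2
  obtain ⟨p0, hp0⟩ := N.reach v hvV
  obtain ⟨hP0, -, -, -⟩ := aux_pathFrom_link hp0 hq1 hc1
  have hrP0 : r ∈ p0 ++ q1 := hrSA ℓ1 h1 _ hP0
  -- r reaches v
  have hrv : ∃ pr, N.G.PathFrom r v pr := by
    rcases List.mem_append.mp hrP0 with h | h
    · exact aux_pathFrom_suf hp0 h
    · exfalso
      obtain ⟨q, hqpre⟩ := aux_pathFrom_pre hq1 h
      obtain ⟨pz, hpz⟩ := N.reach ℓ2 (hXV ℓ2 (hA h2))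
      have hrpz : r ∈ pz := hrSA ℓ2 h2 pz hpz
      obtain ⟨qz, hqz⟩ := aux_pathFrom_suf hpz hrpz
      exact hnd (aux_reaches_trans ⟨q, hqpre⟩ ⟨qz, hqz⟩)
  obtain ⟨pr, hpr⟩ := hrv
  obtain ⟨hP1, m1, m2, hP1d⟩ := aux_pathFrom_link hpr hq1 hc1
  obtain ⟨hP2, n1, n2, hP2d⟩ := aux_pathFrom_link hpr hq2 hc2
  set pG := N.G.pathGraph r A with hpGdef
  have hpGV : ∀ u, u ∈ N.G.V →
      (∃ x ∈ A, ∃ pp, N.G.PathFrom r x pp ∧ u ∈ pp) → u ∈ pG.V :=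
    fun u hu hw => Finset.mem_filter.mpr ⟨hu, hw⟩
  have hpGE : ∀ e : α × α, e ∈ N.G.E →
      (∃ x ∈ A, ∃ pp, N.G.PathFrom r x pp ∧ e ∈ pp.zip pp.tail) → e ∈ pG.E :=
    fun e he hw => Multiset.mem_filter.mpr ⟨he, hw⟩
  have hsubV : ∀ u ∈ pG.V, u ∈ N.G.V := fun u hu => (Finset.mem_filter.mp hu).1
  have hsubE : ∀ e ∈ pG.E, e ∈ N.G.E := fun e he => (Multiset.mem_filter.mp he).1
  have harc1 : (v, c1) ∈ pG.E :=
    hpGE _ hc1 ⟨ℓ1, h1, pr ++ q1, hP1, aux_zip_consec.mpr ⟨m1, m2, hP1d⟩⟩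
  have harc2 : (v, c2) ∈ pG.E :=
    hpGE _ hc2 ⟨ℓ2, h2, pr ++ q2, hP2, aux_zip_consec.mpr ⟨n1, n2, hP2d⟩⟩
  -- the tail paths live in the path graph
  have hsub : ∀ (q : List α) (c ℓ : α), ℓ ∈ A → N.G.PathFrom c ℓ q →
      N.G.PathFrom r ℓ (pr ++ q) → pG.PathFrom c ℓ q := by
    intro q c ℓ hℓ hq hP
    obtain ⟨⟨hne, hmem, hch⟩, hh, hl⟩ := hq
    refine ⟨⟨hne, ?_, ?_⟩, hh, hl⟩
    · intro u hu
      exact hpGV u (hmem u hu) ⟨ℓ, hℓ, pr ++ q, hP, List.mem_append.mpr (Or.inr hu)⟩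
    · refine aux_chain'_of_consec ?_
      intro a b w1 w2 hdec
      refine hpGE _ (aux_chain'_consec (hdec ▸ hch)) ⟨ℓ, hℓ, pr ++ q, hP,
        aux_zip_consec.mpr ⟨pr ++ w1, w2, by rw [hdec, ← List.append_assoc]⟩⟩
  have hrch1 : AuxRch pG c1 ℓ1 := aux_pathFrom_rch (hsub q1 c1 ℓ1 h1 hq1 hP1)
  have hrch2 : AuxRch pG c2 ℓ2 := aux_pathFrom_rch (hsub q2 c2 ℓ2 h2 hq2 hP2)
  have hnr : ¬ AuxRch pG c1 ℓ2 :=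
    fun h => hnd (aux_rch_pathFrom hc1V (aux_rch_mono hsubV hsubE h))
  have hInv : AuxInv pG v ℓ1 ℓ2 := by
    refine ⟨?_, ?_, ?_, ?_, ?_, c1, c2, harc1, harc2, hrch1, hrch2, hnr⟩
    · rintro ⟨e1, e2⟩ he
      obtain ⟨heN, x, hx, pp, hpp, hz⟩ := Multiset.mem_filter.mp he
      obtain ⟨w1, w2, hdec⟩ := aux_zip_consec.mp hz
      constructor
      · exact hpGV _ (N.wf _ heN).1 ⟨x, hx, pp, hpp, by rw [hdec]; simp⟩
      · exact hpGV _ (N.wf _ heN).2 ⟨x, hx, pp, hpp, by rw [hdec]; simp⟩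
    · intro e he h
      exact N.acyclic e (hsubE e he)
        (aux_rch_pathFrom (N.wf _ (hsubE e he)).2 (aux_rch_mono hsubV hsubE h))
    · exact fun x hx => hXout ℓ1 (hA h1) x (hsubE _ hx)
    · exact fun x hx => hXout ℓ2 (hA h2) x (hsubE _ hx)
    · exact hpGV v hvV ⟨ℓ1, h1, pr ++ q1, hP1, by rw [hP1d]; simp⟩
  exact (aux_inv_rtg hrtg hInv).vmem
end

section
/- Let N be a rooted binary phylogenetic network on X, let A ⊆ X, and let v be a reticulation of N. If a parent of v is a vertex of the exhibited network N_A, then v is also a vertex of N_A. -/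
open scoped Classical

set_option linter.unusedSectionVars false
set_option maxHeartbeats 1000000

namespace PfAux
variable {α : Type*} [DecidableEq α]

/-- zip-membership from a split. -/
lemma mem_zip_of_split (a b : α) : ∀ (s t : List α),
    (a, b) ∈ (s ++ a :: b :: t).zip (s ++ a :: b :: t).tail := by
  intro s t
  induction s with
  | nil => simp [List.zip]
  | cons c s ih =>
      have hne : (s ++ a :: b :: t) ≠ [] := by simp
      obtain ⟨h, l', hl⟩ := List.exists_cons_of_ne_nil hne
      simp only [List.cons_append, List.tail_cons]
      rw [hl]
      have : (c :: h :: l').zip (h :: l') = (c, h) :: (h :: l').zip l' := rfl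
      rw [this]
      right
      have := ih
      rw [hl] at this
      exact this

/-- A chain relation holds on any zip-consecutive pair. -/
lemma rel_of_mem_zip {R : α → α → Prop} {a b : α} :
    ∀ {l : List α}, l.Chain' R → (a, b) ∈ l.zip l.tail → R a b := by
  intro l
  induction l with
  | nil => intro _ h; simp [List.zip] at h
  | cons c l ih =>
      intro hc hm
      cases l with
      | nil => simp [List.zip] at hm
      | cons d l' =>
          have : (c :: d :: l').zip (d :: l') = (c, d) :: (d :: l').zip l' := rfl
          rw [List.tail_cons, this] at hm
          rcases List.mem_cons.mp hm with h | h
          · obtain ⟨h1, h2⟩ := Prod.mk.injEq a b c d ▸ h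
            subst h1; subst h2; exact (List.isChain_cons_cons.mp hc).1
          · exact ih (List.isChain_cons_cons.mp hc).2 h

/-- Transport a chain along zip-membership. -/
lemma chain'_of_zip {R S : α → α → Prop} :
    ∀ {l : List α}, l.Chain' R →
      (∀ a b, (a, b) ∈ l.zip l.tail → S a b) → l.Chain' S := by
  intro l
  induction l with
  | nil => intro _ _; exact List.isChain_nil
  | cons c l ih =>
      intro hc hz
      cases l with
      | nil => exact List.isChain_singleton _
      | cons d l' =>
          refine List.isChain_cons_cons.mpr ?_
          constructor
          · exact hz c d (by rw [List.tail_cons]; exact mem_zip_of_split c d [] l')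
          · exact ih (List.isChain_cons_cons.mp hc).2 (fun a b h => hz a b (by
              rw [List.tail_cons]
              have : (c :: d :: l').zip (d :: l') = (c, d) :: (d :: l').zip l' := rfl
              rw [this]; exact List.mem_cons_of_mem _ h))

lemma split_of_mem_zip {a b : α} :
    ∀ {l : List α}, (a, b) ∈ l.zip l.tail → ∃ s t, l = s ++ a :: b :: t := by
  intro l
  induction l with
  | nil => intro h; simp [List.zip] at h
  | cons c l ih =>
      intro hm
      cases l with
      | nil => simp [List.zip] at hm
      | cons d l' =>
          have hz : (c :: d :: l').zip (c :: d :: l').tail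
              = (c, d) :: ((d :: l').zip ((d :: l').tail)) := rfl
          rw [hz] at hm
          rcases List.mem_cons.mp hm with h | h
          · obtain ⟨h1, h2⟩ := Prod.mk.injEq a b c d ▸ h
            subst h1; subst h2
            exact ⟨[], l', rfl⟩
          · obtain ⟨s, t, hst⟩ := ih h
            exact ⟨c :: s, t, by rw [List.cons_append, ← hst]⟩

open Digraph'

variable {G G' : Digraph' α}

lemma path_ne_nil {u v : α} {l : List α} (h : G.PathFrom u v l) : l ≠ [] := h.1.1

lemma path_cons {u v : α} {l : List α} (h : G.PathFrom u v l) : ∃ t, l = u :: t := by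
  cases l with
  | nil => exact absurd rfl h.1.1
  | cons a t =>
      have : a = u := by simpa using h.2.1
      exact ⟨t, by rw [this]⟩

lemma path_mem_left {u v : α} {l : List α} (h : G.PathFrom u v l) : u ∈ l := by
  obtain ⟨t, rfl⟩ := path_cons h; simp

lemma path_mem_right {u v : α} {l : List α} (h : G.PathFrom u v l) : v ∈ l := by
  have h1 := h.2.2
  have hne := h.1.1
  have := List.getLast?_eq_getLast hne
  rw [this] at h1
  have : l.getLast hne = v := by simpa using h1
  exact this ▸ List.getLast_mem hne

lemma path_single {u : α} (hu : u ∈ G.V) : G.PathFrom u u [u] := by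
  refine ⟨⟨by simp, by simpa using hu, List.isChain_singleton u⟩, by simp, by simp⟩

lemma path_append_arc {a b c d : α} {l m : List α} (h1 : G.PathFrom a b l)
    (h2 : G.PathFrom c d m) (harc : (b, c) ∈ G.E) : G.PathFrom a d (l ++ m) := by
  refine ⟨⟨by simp [h1.1.1], ?_, ?_⟩, ?_, ?_⟩
  · intro y hy
    rcases List.mem_append.mp hy with h | h
    · exact h1.1.2.1 y h
    · exact h2.1.2.1 y h
  · refine List.IsChain.append h1.1.2.2 h2.1.2.2 ?_
    intro x hx y hy
    rw [h1.2.2] at hx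
    rw [h2.2.1] at hy
    simp only [Option.mem_some_iff] at hx hy
    exact hx ▸ hy ▸ harc
  · rw [List.head?_append, h1.2.1]; rfl
  · rw [List.getLast?_append, h2.2.2]; rfl

lemma path_trans {a b c : α} {l m : List α} (h1 : G.PathFrom a b l)
    (h2 : G.PathFrom b c m) : G.PathFrom a c (l ++ m.tail) := by
  obtain ⟨t, rfl⟩ := path_cons h2
  cases t with
  | nil =>
      have : b = c := by simpa using h2.2.2
      subst this
      simpa using h1
  | cons e t' =>
      have harc : (b, e) ∈ G.E := (List.isChain_cons_cons.mp h2.1.2.2).1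
      have h2' : G.PathFrom e c (e :: t') := by
        refine ⟨⟨by simp, ?_, (List.isChain_cons_cons.mp h2.1.2.2).2⟩, by simp, ?_⟩
        · intro y hy; exact h2.1.2.1 y (List.mem_cons_of_mem _ hy)
        · have := h2.2.2
          rwa [List.getLast?_cons_cons] at this
      exact path_append_arc h1 h2' harc

lemma reaches_trans {a b c : α} (h1 : G.Reaches a b) (h2 : G.Reaches b c) :
    G.Reaches a c := by
  obtain ⟨l, hl⟩ := h1; obtain ⟨m, hm⟩ := h2
  exact ⟨l ++ m.tail, path_trans hl hm⟩

lemma path_prefix_of_split {a b c : α} {l s t : List α} (h : G.PathFrom a b l)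
    (hl : l = s ++ c :: t) : G.PathFrom a c (s ++ [c]) := by
  have hpre : (s ++ [c]) <+: l := ⟨t, by rw [hl]; simp⟩
  refine ⟨⟨by simp, ?_, h.1.2.2.prefix hpre⟩, ?_, List.getLast?_concat⟩
  · intro y hy; exact h.1.2.1 y (hpre.subset hy)
  · have := h.2.1
    rw [hl] at this
    rw [List.head?_append] at this ⊢
    cases s with
    | nil => simpa using this
    | cons u s' => simpa using this

lemma path_suffix_of_split {a b c : α} {l s t : List α} (h : G.PathFrom a b l)
    (hl : l = s ++ c :: t) : G.PathFrom c b (c :: t) := by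
  have hsuf : (c :: t) <:+ l := ⟨s, by rw [hl]⟩
  refine ⟨⟨by simp, ?_, h.1.2.2.suffix hsuf⟩, rfl, ?_⟩
  · intro y hy; exact h.1.2.1 y (hsuf.subset hy)
  · have := h.2.2
    rw [hl, List.getLast?_append] at this
    simpa using this

lemma path_split {a b c : α} {l : List α} (h : G.PathFrom a b l) (hc : c ∈ l) :
    ∃ s t, l = s ++ c :: t ∧ G.PathFrom a c (s ++ [c]) ∧ G.PathFrom c b (c :: t) := by
  obtain ⟨s, t, hl⟩ := List.append_of_mem hc
  exact ⟨s, t, hl, path_prefix_of_split h hl, path_suffix_of_split h hl⟩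

lemma no_self_arc {a : α} (hac : G.Acyclic) (hv : a ∈ G.V) (h : (a, a) ∈ G.E) : False :=
  hac (a, a) h ⟨[a], path_single hv⟩

lemma not_reaches_both {a b : α} (hac : G.Acyclic) (hne : a ≠ b)
    (h1 : G.Reaches a b) (h2 : G.Reaches b a) : False := by
  obtain ⟨l, hl⟩ := h1
  obtain ⟨t, rfl⟩ := path_cons hl
  cases t with
  | nil => exact hne (by simpa using hl.2.2)
  | cons z t' =>
      have harc : (a, z) ∈ G.E := (List.isChain_cons_cons.mp hl.1.2.2).1
      have hzb : G.PathFrom z b (z :: t') := path_suffix_of_split hl (by simp : a :: z :: t' = [a] ++ z :: t')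
      exact hac (a, z) harc (reaches_trans ⟨_, hzb⟩ h2)

lemma one_le_inDeg {u y : α} (h : (u, y) ∈ G.E) : 1 ≤ G.inDeg y := by
  have : (u, y) ∈ G.E.filter (fun e => e.2 = y) := Multiset.mem_filter.mpr ⟨h, rfl⟩
  have := Multiset.card_pos_iff_exists_mem.mpr ⟨_, this⟩
  unfold Digraph'.inDeg
  omega

lemma one_le_outDeg {y u : α} (h : (y, u) ∈ G.E) : 1 ≤ G.outDeg y := by
  have : (y, u) ∈ G.E.filter (fun e => e.1 = y) := Multiset.mem_filter.mpr ⟨h, rfl⟩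
  have := Multiset.card_pos_iff_exists_mem.mpr ⟨_, this⟩
  unfold Digraph'.outDeg
  omega

lemma in_arcs_eq {a y : α} (h1 : G.inDeg y = 1) (h : (a, y) ∈ G.E) :
    G.E.filter (fun e => e.2 = y) = {(a, y)} := by
  obtain ⟨e, he⟩ := Multiset.card_eq_one.mp h1
  have : (a, y) ∈ G.E.filter (fun e => e.2 = y) := Multiset.mem_filter.mpr ⟨h, rfl⟩
  rw [he] at this ⊢
  simp only [Multiset.mem_singleton] at this
  rw [this]

lemma out_arcs_eq {y a : α} (h1 : G.outDeg y = 1) (h : (y, a) ∈ G.E) :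
    G.E.filter (fun e => e.1 = y) = {(y, a)} := by
  obtain ⟨e, he⟩ := Multiset.card_eq_one.mp h1
  have : (y, a) ∈ G.E.filter (fun e => e.1 = y) := Multiset.mem_filter.mpr ⟨h, rfl⟩
  rw [he] at this ⊢
  simp only [Multiset.mem_singleton] at this
  rw [this]

lemma in_unique {a b y : α} (h1 : G.inDeg y = 1) (ha : (a, y) ∈ G.E)
    (hb : (b, y) ∈ G.E) : b = a := by
  have := in_arcs_eq h1 ha
  have hbm : (b, y) ∈ G.E.filter (fun e => e.2 = y) := Multiset.mem_filter.mpr ⟨hb, rfl⟩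
  rw [this] at hbm
  simpa using (Prod.mk.injEq b y a y ▸ Multiset.mem_singleton.mp hbm).1

lemma out_unique {a b y : α} (h1 : G.outDeg y = 1) (ha : (y, a) ∈ G.E)
    (hb : (y, b) ∈ G.E) : b = a := by
  have := out_arcs_eq h1 ha
  have hbm : (y, b) ∈ G.E.filter (fun e => e.1 = y) := Multiset.mem_filter.mpr ⟨hb, rfl⟩
  rw [this] at hbm
  simpa using (Prod.mk.injEq y b y a ▸ Multiset.mem_singleton.mp hbm).2

lemma inDeg_mono (h : G'.E ≤ G.E) (y : α) : G'.inDeg y ≤ G.inDeg y :=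
  Multiset.card_le_card (Multiset.filter_le_filter _ h)

lemma outDeg_mono (h : G'.E ≤ G.E) (y : α) : G'.outDeg y ≤ G.outDeg y :=
  Multiset.card_le_card (Multiset.filter_le_filter _ h)

lemma inDeg_erase_ne {e : α × α} {y : α} (hE : G'.E = G.E.erase e) (he : e ∈ G.E)
    (h2 : e.2 ≠ y) : G'.inDeg y = G.inDeg y := by
  unfold Digraph'.inDeg
  rw [hE]
  conv_rhs => rw [← Multiset.cons_erase he]
  rw [Multiset.filter_cons, if_neg h2]
  simp

lemma outDeg_erase_ne {e : α × α} {y : α} (hE : G'.E = G.E.erase e) (he : e ∈ G.E)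
    (h2 : e.1 ≠ y) : G'.outDeg y = G.outDeg y := by
  unfold Digraph'.outDeg
  rw [hE]
  conv_rhs => rw [← Multiset.cons_erase he]
  rw [Multiset.filter_cons, if_neg h2]
  simp

lemma inDeg_erase_eq {e : α × α} {y : α} (hE : G'.E = G.E.erase e) (he : e ∈ G.E)
    (h2 : e.2 = y) : G.inDeg y = G'.inDeg y + 1 := by
  unfold Digraph'.inDeg
  rw [hE]
  conv_lhs => rw [← Multiset.cons_erase he]
  rw [Multiset.filter_cons, if_pos h2]
  simp [add_comm]

lemma outDeg_erase_eq {e : α × α} {y : α} (hE : G'.E = G.E.erase e) (he : e ∈ G.E)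
    (h2 : e.1 = y) : G.outDeg y = G'.outDeg y + 1 := by
  unfold Digraph'.outDeg
  rw [hE]
  conv_lhs => rw [← Multiset.cons_erase he]
  rw [Multiset.filter_cons, if_pos h2]
  simp [add_comm]

lemma two_le_outDeg_of_count {e : α × α} (h : 2 ≤ G.E.count e) : 2 ≤ G.outDeg e.1 := by
  have h1 : G.E.count e = (G.E.filter (fun f => f.1 = e.1)).count e := by
    rw [Multiset.count_filter]
    simp
  have := (G.E.filter (fun f => f.1 = e.1)).count_le_card e
  unfold Digraph'.outDeg
  omega

lemma two_le_inDeg_of_count {e : α × α} (h : 2 ≤ G.E.count e) : 2 ≤ G.inDeg e.2 := by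
  have h1 : G.E.count e = (G.E.filter (fun f => f.2 = e.2)).count e := by
    rw [Multiset.count_filter]
    simp
  have := (G.E.filter (fun f => f.2 = e.2)).count_le_card e
  unfold Digraph'.inDeg
  omega

lemma out_arcs_replicate {y z : α} (hc : 2 ≤ G.E.count (y, z)) (h2 : G.outDeg y = 2) :
    ∀ b, (y, b) ∈ G.E → b = z := by
  intro b hb
  have hrep : Multiset.replicate 2 (y, z) ≤ G.E.filter (fun f => f.1 = y) := by
    rw [← Multiset.le_count_iff_replicate_le, Multiset.count_filter]
    simpa using hc
  have heq : G.E.filter (fun f => f.1 = y) = Multiset.replicate 2 (y, z) :=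
    (Multiset.eq_of_le_of_card_le hrep (by
      unfold Digraph'.outDeg at h2
      simp [h2])).symm
  have hbm : (y, b) ∈ G.E.filter (fun f => f.1 = y) := Multiset.mem_filter.mpr ⟨hb, rfl⟩
  rw [heq] at hbm
  have := Multiset.eq_of_mem_replicate hbm
  simpa using (Prod.mk.injEq y b y z ▸ this).2

lemma out_pair {y u1 u2 : α} (h2 : G.outDeg y = 2) (ha : (y, u1) ∈ G.E)
    (hb : (y, u2) ∈ G.E) (hne : u1 ≠ u2) : ∀ z, (y, z) ∈ G.E → z = u1 ∨ z = u2 := by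
  intro z hz
  obtain ⟨e1, e2, hee⟩ := Multiset.card_eq_two.mp h2
  have hm : ∀ c, (y, c) ∈ G.E → (y, c) = e1 ∨ (y, c) = e2 := by
    intro c hc
    have : (y, c) ∈ G.E.filter (fun f => f.1 = y) := Multiset.mem_filter.mpr ⟨hc, rfl⟩
    rw [hee] at this
    simpa [Multiset.mem_cons] using this
  by_contra hcon
  push_neg at hcon
  rcases hm u1 ha with h1 | h1 <;> rcases hm u2 hb with hh2 | hh2 <;>
    rcases hm z hz with h3 | h3 <;>
    first
      | (exact hcon.1 (by have := h3.trans h1.symm; simpa using (Prod.mk.injEq y z y u1 ▸ this).2))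
      | (exact hcon.2 (by have := h3.trans hh2.symm; simpa using (Prod.mk.injEq y z y u2 ▸ this).2))
      | (exact hne (by have := h1.trans hh2.symm; simpa using (Prod.mk.injEq y u1 y u2 ▸ this).2))

lemma filter_swap {β : Type*} (s : Multiset β) (p q : β → Prop) [DecidablePred p]
    [DecidablePred q] :
    Multiset.filter (fun a => p a ∧ q a) s = Multiset.filter (fun a => q a ∧ p a) s :=
  Multiset.filter_congr (fun a _ => and_comm)

lemma card_split {β : Type*} (s : Multiset β) (q p : β → Prop) [DecidablePred p]
    [DecidablePred q] :
    Multiset.card (Multiset.filter q s) =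
      Multiset.card (Multiset.filter (fun a => q a ∧ p a) s) +
      Multiset.card (Multiset.filter (fun a => q a ∧ ¬ p a) s) := by
  have h := Multiset.filter_add_not p (Multiset.filter q s)
  have h1 : Multiset.filter p (Multiset.filter q s)
      = Multiset.filter (fun a => q a ∧ p a) s := by
    rw [Multiset.filter_filter]; exact filter_swap s p q
  have h2 : Multiset.filter (fun a => ¬ p a) (Multiset.filter q s)
      = Multiset.filter (fun a => q a ∧ ¬ p a) s := by
    rw [Multiset.filter_filter]; exact filter_swap s (fun a => ¬ p a) q
  rw [h1, h2] at h
  rw [← h, Multiset.card_add]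

lemma suppress_inDeg {w : α} (hs : G.Suppress w G') {y : α} (hy : y ≠ w) :
    G'.inDeg y = G.inDeg y := by
  obtain ⟨h1, h2, p₀, c₀, hpw, hwc, hV, hE⟩ := hs
  have houtw := out_arcs_eq h2 hwc
  have hdv : (G.deleteVertex w).E = G.E.filter (fun e => e.1 ≠ w ∧ e.2 ≠ w) := rfl
  have hcongr : Multiset.filter (fun e => (e : α × α).2 = y ∧ (¬ e.1 = w ∧ ¬ e.2 = w)) G.E
      = Multiset.filter (fun e => (e : α × α).2 = y ∧ ¬ e.1 = w) G.E := by
    refine Multiset.filter_congr (fun e _ => ?_)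
    constructor
    · rintro ⟨hq, hp, _⟩; exact ⟨hq, hp⟩
    · rintro ⟨hq, hp⟩; exact ⟨hq, hp, by rw [hq]; exact hy⟩
  have hsing : ∀ (u : α), Multiset.card (Multiset.filter (fun e => (e : α × α).2 = y)
      ({(u, c₀)} : Multiset (α × α))) = if c₀ = y then 1 else 0 := by
    intro u
    rw [Multiset.filter_singleton]
    by_cases hcy : c₀ = y
    · rw [if_pos hcy, if_pos hcy]; simp
    · rw [if_neg hcy, if_neg hcy]; simp
  have hL : G'.inDeg y =
      Multiset.card (Multiset.filter (fun e => (e : α × α).2 = y ∧ ¬ e.1 = w) G.E) +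
      (if c₀ = y then 1 else 0) := by
    unfold Digraph'.inDeg
    rw [hE, hdv, Multiset.filter_add, Multiset.card_add, Multiset.filter_filter, hcongr,
      hsing p₀]
  have hC : Multiset.filter (fun e => (e : α × α).2 = y ∧ e.1 = w) G.E
      = Multiset.filter (fun e => (e : α × α).2 = y) ({(w, c₀)} : Multiset (α × α)) := by
    rw [← houtw, Multiset.filter_filter]
  have hR : G.inDeg y =
      (if c₀ = y then 1 else 0) +
      Multiset.card (Multiset.filter (fun e => (e : α × α).2 = y ∧ ¬ e.1 = w) G.E) := by
    unfold Digraph'.inDeg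
    rw [card_split G.E (fun e => (e : α × α).2 = y) (fun e => (e : α × α).1 = w), hC,
      hsing w]
  rw [hL, hR]
  omega

lemma suppress_outDeg {w : α} (hs : G.Suppress w G') {y : α} (hy : y ≠ w) :
    G'.outDeg y = G.outDeg y := by
  obtain ⟨h1, h2, p₀, c₀, hpw, hwc, hV, hE⟩ := hs
  have hinw := in_arcs_eq h1 hpw
  have hdv : (G.deleteVertex w).E = G.E.filter (fun e => e.1 ≠ w ∧ e.2 ≠ w) := rfl
  have hcongr : Multiset.filter (fun e => (e : α × α).1 = y ∧ (¬ e.1 = w ∧ ¬ e.2 = w)) G.E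
      = Multiset.filter (fun e => (e : α × α).1 = y ∧ ¬ e.2 = w) G.E := by
    refine Multiset.filter_congr (fun e _ => ?_)
    constructor
    · rintro ⟨hq, _, hp⟩; exact ⟨hq, hp⟩
    · rintro ⟨hq, hp⟩; exact ⟨hq, by rw [hq]; exact hy, hp⟩
  have hsing : ∀ (u : α), Multiset.card (Multiset.filter (fun e => (e : α × α).1 = y)
      ({(p₀, u)} : Multiset (α × α))) = if p₀ = y then 1 else 0 := by
    intro u
    rw [Multiset.filter_singleton]
    by_cases hcy : p₀ = y
    · rw [if_pos hcy, if_pos hcy]; simp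
    · rw [if_neg hcy, if_neg hcy]; simp
  have hL : G'.outDeg y =
      Multiset.card (Multiset.filter (fun e => (e : α × α).1 = y ∧ ¬ e.2 = w) G.E) +
      (if p₀ = y then 1 else 0) := by
    unfold Digraph'.outDeg
    rw [hE, hdv, Multiset.filter_add, Multiset.card_add, Multiset.filter_filter, hcongr,
      hsing c₀]
  have hC : Multiset.filter (fun e => (e : α × α).1 = y ∧ e.2 = w) G.E
      = Multiset.filter (fun e => (e : α × α).1 = y) ({(p₀, w)} : Multiset (α × α)) := by
    rw [← hinw, Multiset.filter_filter]
  have hR : G.outDeg y =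
      (if p₀ = y then 1 else 0) +
      Multiset.card (Multiset.filter (fun e => (e : α × α).1 = y ∧ ¬ e.2 = w) G.E) := by
    unfold Digraph'.outDeg
    rw [card_split G.E (fun e => (e : α × α).1 = y) (fun e => (e : α × α).2 = w), hC,
      hsing w]
  rw [hL, hR]
  omega

lemma step_V_subset (h : SimpStep G G') : G'.V ⊆ G.V := by
  rcases h with ⟨w, hs⟩ | ⟨e, hc, hV, hE⟩
  · obtain ⟨_, _, p₀, c₀, _, _, hV, _⟩ := hs
    rw [hV]; exact Finset.erase_subset w G.V
  · rw [hV]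

lemma rtg_V_subset {H : Digraph' α} (h : Relation.ReflTransGen (SimpStep (α := α)) G H) :
    H.V ⊆ G.V := by
  induction h with
  | refl => exact fun x hx => hx
  | tail _ st ih => exact fun x hx => ih (step_V_subset st hx)

lemma step_mem_e {e : α × α} (hc : 2 ≤ G.E.count e) : e ∈ G.E := by
  rw [← Multiset.count_pos]; omega

lemma step_inDeg_le (h : SimpStep G G') {y : α} (hy : y ∈ G'.V) :
    G'.inDeg y ≤ G.inDeg y ∧ G'.outDeg y ≤ G.outDeg y := by
  rcases h with ⟨w, hs⟩ | ⟨e, hc, hV, hE⟩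
  · have hyw : y ≠ w := by
      obtain ⟨_, _, p₀, c₀, _, _, hV, _⟩ := hs
      rw [hV] at hy
      exact (Finset.mem_erase.mp hy).1
    rw [suppress_inDeg hs hyw, suppress_outDeg hs hyw]
    exact ⟨le_refl _, le_refl _⟩
  · have hle : G'.E ≤ G.E := hE ▸ Multiset.erase_le e G.E
    exact ⟨inDeg_mono hle y, outDeg_mono hle y⟩

lemma step_deg_frozen (h : SimpStep G G') {y : α} (hy : y ∈ G'.V) :
    (G.inDeg y ≤ 1 → G'.inDeg y = G.inDeg y) ∧
    (G.outDeg y ≤ 1 → G'.outDeg y = G.outDeg y) ∧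
    (1 ≤ G.inDeg y → 1 ≤ G'.inDeg y) ∧
    (1 ≤ G.outDeg y → 1 ≤ G'.outDeg y) := by
  rcases h with ⟨w, hs⟩ | ⟨e, hc, hV, hE⟩
  · have hyw : y ≠ w := by
      obtain ⟨_, _, p₀, c₀, _, _, hV, _⟩ := hs
      rw [hV] at hy
      exact (Finset.mem_erase.mp hy).1
    rw [suppress_inDeg hs hyw, suppress_outDeg hs hyw]
    exact ⟨fun _ => rfl, fun _ => rfl, fun h => h, fun h => h⟩
  · have he : e ∈ G.E := step_mem_e hc
    refine ⟨?_, ?_, ?_, ?_⟩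
    · intro hle
      by_cases h2 : e.2 = y
      · exfalso
        have := two_le_inDeg_of_count (G := G) hc
        rw [h2] at this; omega
      · exact inDeg_erase_ne hE he h2
    · intro hle
      by_cases h2 : e.1 = y
      · exfalso
        have := two_le_outDeg_of_count (G := G) hc
        rw [h2] at this; omega
      · exact outDeg_erase_ne hE he h2
    · intro hpos
      by_cases h2 : e.2 = y
      · have h3 := two_le_inDeg_of_count (G := G) hc
        rw [h2] at h3
        have h4 := inDeg_erase_eq hE he h2
        omega
      · rw [inDeg_erase_ne hE he h2]; exact hpos
    · intro hpos
      by_cases h2 : e.1 = y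
      · have h3 := two_le_outDeg_of_count (G := G) hc
        rw [h2] at h3
        have h4 := outDeg_erase_eq hE he h2
        omega
      · rw [outDeg_erase_ne hE he h2]; exact hpos

lemma rtg_frozen {H : Digraph' α} (h : Relation.ReflTransGen (SimpStep (α := α)) G H)
    {y : α} (hy : y ∈ H.V) (h1 : G.inDeg y = 1) (h2 : G.outDeg y = 1) :
    H.inDeg y = 1 ∧ H.outDeg y = 1 := by
  induction h using Relation.ReflTransGen.head_induction_on with
  | refl => exact ⟨h1, h2⟩
  | head st run ih =>
      rename_i a c
      have hyc : y ∈ c.V := rtg_V_subset run hy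
      have hf := step_deg_frozen st hyc
      exact ih (by rw [hf.1 (by omega)]; exact h1) (by rw [hf.2.1 (by omega)]; exact h2)

lemma rtg_root_mem {H : Digraph' α} (h : Relation.ReflTransGen (SimpStep (α := α)) G H)
    {r : α} (hr : r ∈ G.V) (h0 : G.inDeg r = 0) : r ∈ H.V := by
  have : r ∈ H.V ∧ H.inDeg r = 0 := by
    induction h with
    | refl => exact ⟨hr, h0⟩
    | tail run st ih =>
        rcases st with ⟨w, hs⟩ | ⟨e, hc, hV, hE⟩
        · have hwr : r ≠ w := by
            intro hh
            have := hs.1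
            rw [← hh, ih.2] at this
            exact absurd this (by omega)
          refine ⟨?_, by rw [suppress_inDeg hs hwr]; exact ih.2⟩
          obtain ⟨_, _, p₀, c₀, _, _, hV, _⟩ := hs
          rw [hV]
          exact Finset.mem_erase.mpr ⟨hwr, ih.1⟩
        · refine ⟨by rw [hV]; exact ih.1, ?_⟩
          have hle : _ ≤ _ := hE ▸ Multiset.erase_le e _
          have := inDeg_mono hle r
          omega
  exact this.1

lemma term_no11 {H : Digraph' α} (hterm : ∀ G'', ¬ SimpStep H G'') {y : α}
    (h1 : H.inDeg y = 1) (h2 : H.outDeg y = 1) : False := by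
  obtain ⟨e, he⟩ := Multiset.card_eq_one.mp h1
  obtain ⟨f, hf⟩ := Multiset.card_eq_one.mp h2
  have hem : e ∈ Multiset.filter (fun e => (e : α × α).2 = y) H.E := by
    rw [he]; exact Multiset.mem_singleton_self e
  have hfm : f ∈ Multiset.filter (fun e => (e : α × α).1 = y) H.E := by
    rw [hf]; exact Multiset.mem_singleton_self f
  have he1 : e ∈ H.E ∧ e.2 = y := Multiset.mem_filter.mp hem
  have hf1 : f ∈ H.E ∧ f.1 = y := Multiset.mem_filter.mp hfm
  have heq : (e.1, y) = e := by rw [← he1.2]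
  have hfq : (y, f.2) = f := by rw [← hf1.2]
  refine hterm ⟨H.V.erase y, (H.deleteVertex y).E + {(e.1, f.2)}⟩ (Or.inl ⟨y, h1, h2,
    e.1, f.2, ?_, ?_, rfl, rfl⟩)
  · rw [heq]; exact he1.1
  · rw [hfq]; exact hf1.1

lemma term_count {H : Digraph' α} (hterm : ∀ G'', ¬ SimpStep H G'') (e : α × α) :
    H.E.count e ≤ 1 := by
  by_contra hcon
  exact hterm ⟨H.V, H.E.erase e⟩ (Or.inr ⟨e, by omega, rfl, rfl⟩)

lemma chain'_short {β : Type*} {R : β → β → Prop} {l : List β} (h : l.length ≤ 1) :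
    l.Chain' R := by
  match l with
  | [] => exact List.isChain_nil
  | [a] => exact List.isChain_singleton a
  | a :: b :: t => simp at h

lemma chain_filter {E E' : Multiset (α × α)} {w p₀ c₀ : α} (hp₀ : p₀ ≠ w) (hc₀ : c₀ ≠ w)
    (hinu : ∀ x, (x, w) ∈ E → x = p₀) (houtu : ∀ x, (w, x) ∈ E → x = c₀)
    (hkeep : ∀ a b, (a, b) ∈ E → a ≠ w → b ≠ w → (a, b) ∈ E')
    (hnew : (p₀, c₀) ∈ E') :
    ∀ (n : ℕ) (q : List α), q.length ≤ n → q.Chain' (fun u v => (u, v) ∈ E) →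
      (∀ a, q.head? = some a → a ≠ w) →
      (q.filter (fun y => decide (y ≠ w))).Chain' (fun u v => (u, v) ∈ E') := by
  intro n
  induction n with
  | zero =>
      intro q hlen _ _
      have : q = [] := List.eq_nil_of_length_eq_zero (by omega)
      subst this; simp; exact List.isChain_nil
  | succ n ih =>
      intro q hlen hc hh
      match q with
      | [] => simp; exact List.isChain_nil
      | [a] => exact chain'_short (le_trans (List.length_filter_le _ _) (by simp))
      | a :: b :: t =>
          have ha : a ≠ w := hh a rfl
          have hab : (a, b) ∈ E := (List.isChain_cons_cons.mp hc).1
          have hcb : (b :: t).Chain' (fun u v => (u, v) ∈ E) := (List.isChain_cons_cons.mp hc).2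
          have hfa : (a :: b :: t).filter (fun y => decide (y ≠ w))
              = a :: ((b :: t).filter (fun y => decide (y ≠ w))) :=
            List.filter_cons_of_pos (by simpa using ha)
          by_cases hb : b = w
          · have hap : a = p₀ := hinu a (by rw [← hb]; exact hab)
            cases t with
            | nil =>
                rw [hfa, List.filter_cons_of_neg (by simp [hb]), List.filter_nil]
                exact List.isChain_singleton a
            | cons d t' =>
                have hwd : (w, d) ∈ E := by rw [← hb]; exact (List.isChain_cons_cons.mp hcb).1
                have hd : d = c₀ := houtu d hwd
                have hdw : d ≠ w := by rw [hd]; exact hc₀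
                have hfb : (b :: d :: t').filter (fun y => decide (y ≠ w))
                    = (d :: t').filter (fun y => decide (y ≠ w)) :=
                  List.filter_cons_of_neg (by simp [hb])
                have hfd : (d :: t').filter (fun y => decide (y ≠ w))
                    = d :: (t'.filter (fun y => decide (y ≠ w))) :=
                  List.filter_cons_of_pos (by simpa using hdw)
                have hih := ih (d :: t') (by simp at hlen ⊢; omega)
                  (by rw [hb] at hcb; exact (List.isChain_cons_cons.mp hcb).2) (fun x hx => by
                    simp only [List.head?_cons, Option.some.injEq] at hx
                    exact hx ▸ hdw)
                rw [hfa, hfb, hfd]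
                rw [hfd] at hih
                exact List.isChain_cons_cons.mpr ⟨by rw [hap, hd]; exact hnew, hih⟩
          · have hfb : (b :: t).filter (fun y => decide (y ≠ w))
                = b :: (t.filter (fun y => decide (y ≠ w))) :=
              List.filter_cons_of_pos (by simpa using hb)
            have hih := ih (b :: t) (by simp at hlen ⊢; omega) hcb
              (fun x hx => by
                simp only [List.head?_cons, Option.some.injEq] at hx
                exact hx ▸ hb)
            rw [hfa, hfb]
            rw [hfb] at hih
            exact List.isChain_cons_cons.mpr ⟨hkeep a b hab ha hb, hih⟩

lemma no_w_mem {E : Multiset (α × α)} {w : α} (hinu : ∀ x, (x, w) ∈ E → x = w) :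
    ∀ (q : List α), q.Chain' (fun u v => (u, v) ∈ E) →
      (∀ a, q.head? = some a → a ≠ w) → w ∉ q := by
  intro q
  induction q with
  | nil => intro _ _; simp
  | cons a l ih =>
      intro hc hh
      have ha : a ≠ w := hh a rfl
      cases l with
      | nil => simpa using fun h => ha h.symm
      | cons b t =>
          have hab : (a, b) ∈ E := (List.isChain_cons_cons.mp hc).1
          have hb : b ≠ w := by
            intro hbw
            rw [hbw] at hab
            exact ha (hinu a hab)
          have := ih (List.isChain_cons_cons.mp hc).2 (fun x hx => by
            simp only [List.head?_cons, Option.some.injEq] at hx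
            exact hx ▸ hb)
          intro hm
          rcases List.mem_cons.mp hm with h | h
          · exact ha h.symm
          · exact this h

lemma psi_suppress {w r x' : α} {q : List α} (hs : G.Suppress w G')
    (hr0 : G.inDeg r = 0) (hx0 : G.outDeg x' = 0) (hq : G.PathFrom r x' q) :
    ∃ q', G'.PathFrom r x' q' ∧ ∀ y ∈ q', y ∈ q := by
  obtain ⟨h1, h2, p₀, c₀, hpw, hwc, hV, hE⟩ := hs
  have hwr : r ≠ w := by intro h; rw [h, h1] at hr0; exact absurd hr0 (by omega)
  have hwx : x' ≠ w := by intro h; rw [h, h2] at hx0; exact absurd hx0 (by omega)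
  have hinu : ∀ x, (x, w) ∈ G.E → x = p₀ := fun x hx => in_unique h1 hpw hx
  have houtu : ∀ x, (w, x) ∈ G.E → x = c₀ := fun x hx => out_unique h2 hwc hx
  have hkeep : ∀ a b, (a, b) ∈ G.E → a ≠ w → b ≠ w → (a, b) ∈ G'.E := by
    intro a b hab ha hb
    rw [hE]
    exact Multiset.mem_add.mpr (Or.inl (Multiset.mem_filter.mpr ⟨hab, ha, hb⟩))
  have hnew : (p₀, c₀) ∈ G'.E := by
    rw [hE]
    exact Multiset.mem_add.mpr (Or.inr (Multiset.mem_singleton_self _))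
  have hhead : ∀ a, q.head? = some a → a ≠ w := by
    intro a hha
    rw [hq.2.1] at hha
    have : r = a := by simpa using hha
    rw [← this]; exact hwr
  by_cases hpp : p₀ = w
  · have hnw : w ∉ q := no_w_mem (fun x hx => (hinu x hx).trans hpp) q hq.1.2.2 hhead
    refine ⟨q, ⟨⟨hq.1.1, ?_, ?_⟩, hq.2.1, hq.2.2⟩, fun y hy => hy⟩
    · intro y hy
      rw [hV]
      exact Finset.mem_erase.mpr ⟨fun h => hnw (h ▸ hy), hq.1.2.1 y hy⟩
    · refine chain'_of_zip hq.1.2.2 (fun a b hz => ?_)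
      have hab := rel_of_mem_zip hq.1.2.2 hz
      have hmem := List.of_mem_zip hz
      exact hkeep a b hab (fun h => hnw (h ▸ hmem.1))
        (fun h => hnw (h ▸ List.mem_of_mem_tail hmem.2))
  · have hc₀ : c₀ ≠ w := by
      intro h
      have hww : (w, w) ∈ G.E := h ▸ hwc
      exact hpp (hinu w hww).symm
    refine ⟨q.filter (fun y => decide (y ≠ w)), ⟨⟨?_, ?_, ?_⟩, ?_, ?_⟩,
      fun y hy => List.mem_of_mem_filter hy⟩
    · obtain ⟨t, rfl⟩ := path_cons hq
      rw [List.filter_cons_of_pos (by simpa using hwr)]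
      simp
    · intro y hy
      have hyq := List.mem_of_mem_filter hy
      have : y ≠ w := by simpa using List.of_mem_filter hy
      rw [hV]
      exact Finset.mem_erase.mpr ⟨this, hq.1.2.1 y hyq⟩
    · exact chain_filter hpp hc₀ hinu houtu hkeep hnew q.length q le_rfl hq.1.2.2 hhead
    · obtain ⟨t, rfl⟩ := path_cons hq
      rw [List.filter_cons_of_pos (by simpa using hwr)]
      simp
    · rw [List.getLast?_eq_head?_reverse, ← List.filter_reverse]
      have hrev : q.reverse.head? = some x' := by
        rw [← List.getLast?_eq_head?_reverse]; exact hq.2.2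
      cases hqr : q.reverse with
      | nil => rw [hqr] at hrev; simp at hrev
      | cons a s =>
          rw [hqr] at hrev
          have : a = x' := by simpa using hrev
          subst this
          rw [List.filter_cons_of_pos (by simpa using hwx)]
          simp

lemma pg_mem_V {r : α} {A : Finset α} {y : α} :
    y ∈ (G.pathGraph r A).V ↔ y ∈ G.V ∧ ∃ x ∈ A, ∃ p, G.PathFrom r x p ∧ y ∈ p :=
  Finset.mem_filter

lemma pg_mem_E {r : α} {A : Finset α} {e : α × α} :
    e ∈ (G.pathGraph r A).E ↔ e ∈ G.E ∧ ∃ x ∈ A, ∃ p, G.PathFrom r x p ∧ e ∈ p.zip p.tail :=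
  Multiset.mem_filter

lemma pg_E_le {r : α} {A : Finset α} : (G.pathGraph r A).E ≤ G.E :=
  Multiset.filter_le _ _

lemma pg_inDeg_le {r : α} {A : Finset α} (y : α) :
    (G.pathGraph r A).inDeg y ≤ G.inDeg y := inDeg_mono pg_E_le y

lemma pg_outDeg_le {r : α} {A : Finset α} (y : α) :
    (G.pathGraph r A).outDeg y ≤ G.outDeg y := outDeg_mono pg_E_le y

lemma pg_path {r : α} {A : Finset α} {x : α} {q : List α} (hx : x ∈ A)
    (hq : G.PathFrom r x q) : (G.pathGraph r A).PathFrom r x q := by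
  refine ⟨⟨hq.1.1, ?_, ?_⟩, hq.2.1, hq.2.2⟩
  · intro y hy
    exact pg_mem_V.mpr ⟨hq.1.2.1 y hy, x, hx, q, hq, hy⟩
  · refine chain'_of_zip hq.1.2.2 (fun a b hz => ?_)
    exact pg_mem_E.mpr ⟨rel_of_mem_zip hq.1.2.2 hz, x, hx, q, hq, hz⟩

lemma pg_arc {r : α} {A : Finset α} {x : α} {q : List α} {a b : α} (hx : x ∈ A)
    (hq : G.PathFrom r x q) (hz : (a, b) ∈ q.zip q.tail) :
    (a, b) ∈ (G.pathGraph r A).E :=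
  pg_mem_E.mpr ⟨rel_of_mem_zip hq.1.2.2 hz, x, hx, q, hq, hz⟩

lemma pg_root_inDeg_zero {r : α} {A : Finset α} (hac : G.Acyclic) :
    (G.pathGraph r A).inDeg r = 0 := by
  by_contra h
  have hpos : 0 < (G.pathGraph r A).inDeg r := by omega
  obtain ⟨e, he⟩ := Multiset.card_pos_iff_exists_mem.mp hpos
  obtain ⟨heE, he2⟩ := Multiset.mem_filter.mp he
  obtain ⟨heN, x, hx, q, hq, hz⟩ := pg_mem_E.mp heE
  have he' : e = (e.1, r) := by rw [← he2]
  rw [he'] at hz heN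
  obtain ⟨s, t, hst⟩ := split_of_mem_zip hz
  have hpre := path_prefix_of_split hq hst
  exact hac (e.1, r) heN ⟨_, hpre⟩

end PfAux

namespace PfAux2
open Digraph' PhyloNet PfAux

variable {α : Type*} [DecidableEq α]

lemma filter_inst {β : Type*} {p : β → Prop} {i1 i2 : DecidablePred p} (s : Multiset β) :
    @Multiset.filter β p i1 s = @Multiset.filter β p i2 s := by
  have h : i1 = i2 := Subsingleton.elim i1 i2
  subst h; rfl

lemma inDeg_inst (i1 i2 : DecidableEq α) (G : Digraph' α) (y : α) :
    @Digraph'.inDeg α i1 G y = @Digraph'.inDeg α i2 G y := by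
  unfold Digraph'.inDeg
  congr 1
  exact filter_inst _

lemma outDeg_inst (i1 i2 : DecidableEq α) (G : Digraph' α) (y : α) :
    @Digraph'.outDeg α i1 G y = @Digraph'.outDeg α i2 G y := by
  unfold Digraph'.outDeg
  congr 1
  exact filter_inst _

lemma bin2 (N : PhyloNet α) (he : N.G.E ≠ 0) :
    N.G.inDeg N.root = 0 ∧ N.G.outDeg N.root = 2 ∧
    (∀ x ∈ N.X, x ∈ N.G.V ∧ N.G.inDeg x = 1 ∧ N.G.outDeg x = 0) ∧
    (∀ v ∈ N.G.V, N.G.outDeg v = 0 → v ∈ N.X) ∧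
    (∀ v ∈ N.G.V, v ≠ N.root → v ∉ N.X →
      (N.G.inDeg v = 1 ∧ N.G.outDeg v = 2) ∨ (N.G.inDeg v = 2 ∧ N.G.outDeg v = 1)) := by
  obtain ⟨h1, h2, h3, h4, h5⟩ := N.binary.resolve_left (fun h => he h.2.1)
  refine ⟨?_, ?_, fun x hx => ?_, fun u hu h0 => ?_, fun u hu hr hx => ?_⟩
  · rw [inDeg_inst _ _ N.G N.root]; exact h1
  · rw [outDeg_inst _ _ N.G N.root]; exact h2
  · obtain ⟨ha, hb, hc⟩ := h3 x hx
    exact ⟨ha, by rw [inDeg_inst _ _ N.G x]; exact hb, by rw [outDeg_inst _ _ N.G x]; exact hc⟩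
  · exact h4 u hu (by rw [← h0]; exact (outDeg_inst _ _ N.G u).symm)
  · rcases h5 u hu hr hx with ⟨ha, hb⟩ | ⟨ha, hb⟩
    · exact Or.inl ⟨by rw [inDeg_inst _ _ N.G u]; exact ha, by rw [outDeg_inst _ _ N.G u]; exact hb⟩
    · exact Or.inr ⟨by rw [inDeg_inst _ _ N.G u]; exact ha, by rw [outDeg_inst _ _ N.G u]; exact hb⟩

lemma indeg_le_one_of_outdeg_two (N : PhyloNet α) (he : N.G.E ≠ 0) {u : α}
    (hu : u ∈ N.G.V) (h2 : N.G.outDeg u = 2) : N.G.inDeg u ≤ 1 := by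
  obtain ⟨hr0, hr2, hX, hX0, hint⟩ := bin2 N he
  by_cases hroot : u = N.root
  · rw [hroot, hr0]; omega
  by_cases hx : u ∈ N.X
  · have := (hX u hx).2.2
    rw [this] at h2; omega
  rcases hint u hu hroot hx with ⟨hi, _⟩ | ⟨_, ho⟩
  · omega
  · rw [ho] at h2; omega

lemma outdeg_le_two (N : PhyloNet α) (he : N.G.E ≠ 0) {u : α} (hu : u ∈ N.G.V) :
    N.G.outDeg u ≤ 2 := by
  obtain ⟨hr0, hr2, hX, hX0, hint⟩ := bin2 N he
  by_cases hroot : u = N.root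
  · rw [hroot, hr2]
  by_cases hx : u ∈ N.X
  · rw [(hX u hx).2.2]; omega
  rcases hint u hu hroot hx with ⟨_, ho⟩ | ⟨_, ho⟩ <;> rw [ho] <;> omega

end PfAux2

namespace PfAux

open Digraph'

variable {α : Type*} [DecidableEq α] {G G' : Digraph' α}

lemma path_pair {a b : α} (h : (a, b) ∈ G.E) (ha : a ∈ G.V) (hb : b ∈ G.V) :
    G.PathFrom a b [a, b] := by
  refine ⟨⟨by simp, ?_, ?_⟩, by simp, by simp⟩
  · intro y hy
    rcases List.mem_cons.mp hy with h1 | h1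
    · rw [h1]; exact ha
    · rw [show y = b by simpa using h1]; exact hb
  · refine List.isChain_cons_cons.mpr ?_
    exact ⟨h, List.isChain_singleton b⟩

lemma two_le_card_pair {β : Type*} [DecidableEq β] {s : Multiset β} {a b : β}
    (ha : a ∈ s) (hb : b ∈ s) (hne : a ≠ b) : 2 ≤ Multiset.card s := by
  have hle : ({a, b} : Multiset β) ≤ s := by
    rw [Multiset.le_iff_count]
    intro x
    rw [Multiset.insert_eq_cons, Multiset.count_cons, Multiset.count_singleton]
    by_cases hxa : x = a <;> by_cases hxb : x = b
    · exact absurd (hxa.symm.trans hxb) hne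
    · simp only [if_pos hxa, if_neg hxb]
      have := Multiset.count_pos.mpr (hxa ▸ ha)
      omega
    · simp only [if_neg hxa, if_pos hxb]
      have := Multiset.count_pos.mpr (hxb ▸ hb)
      omega
    · simp only [if_neg hxa, if_neg hxb]
      omega
  have := Multiset.card_le_card hle
  simpa using this

lemma two_le_outDeg_pair {y u1 u2 : α} (h1 : (y, u1) ∈ G.E) (h2 : (y, u2) ∈ G.E)
    (hne : u1 ≠ u2) : 2 ≤ G.outDeg y :=
  two_le_card_pair (Multiset.mem_filter.mpr ⟨h1, rfl⟩) (Multiset.mem_filter.mpr ⟨h2, rfl⟩)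
    (fun h => hne (by simpa using (Prod.mk.injEq y u1 y u2 ▸ h).2))

end PfAux

/-- if a parent of a reticulation `v` is a vertex of the
exhibited network `N_A`, then so is `v`. -/
theorem retic_mem_exhibited_of_parent_mem
    {α : Type*} [DecidableEq α] (N : PhyloNet α) (A : Finset α)
    (hA : A ⊆ N.X) (v p : α)
    (hret : N.G.inDeg v = 2 ∧ N.G.outDeg v = 1)
    (hp : (p, v) ∈ N.G.E)
    (H : Digraph' α) (hH : N.Exhibits A H) (hpv : p ∈ H.V) :
    v ∈ H.V := by
  obtain ⟨r, hLSA, hrun, hterm⟩ := hH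
  set PG := N.G.pathGraph r A with hPGdef
  have hE0 : N.G.E ≠ 0 := by
    intro h
    rw [h] at hp
    exact Multiset.notMem_zero _ hp
  have hbin := PfAux2.bin2 N hE0
  have hpNV : p ∈ N.G.V := (N.wf (p, v) hp).1
  have hvNV : v ∈ N.G.V := (N.wf (p, v) hp).2
  have hpvne : p ≠ v := fun h => PfAux.no_self_arc N.acyclic (h ▸ hpNV) (h ▸ hp)
  have hpPGV : p ∈ PG.V := PfAux.rtg_V_subset hrun hpv
  obtain ⟨_, x0, hx0A, π, hπ, hpπ⟩ := PfAux.pg_mem_V.mp hpPGV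
  have hleaf : ∀ x ∈ N.X, N.G.inDeg x = 1 ∧ N.G.outDeg x = 0 :=
    fun x hx => ⟨(hbin.2.2.1 x hx).2.1, (hbin.2.2.1 x hx).2.2⟩
  have hvnotX : v ∉ N.X := by
    intro h
    have := (hleaf v h).1
    rw [hret.1] at this
    omega
  have hpnotX : p ∉ N.X := by
    intro h
    have h1 := (hleaf p h).2
    have h2 := PfAux.one_le_outDeg hp
    omega
  have hrPGV : r ∈ PG.V :=
    PfAux.pg_mem_V.mpr ⟨hπ.1.2.1 r (PfAux.path_mem_left hπ), x0, hx0A, π, hπ,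
      PfAux.path_mem_left hπ⟩
  have hr0 : PG.inDeg r = 0 := PfAux.pg_root_inDeg_zero N.acyclic
  have hpgin : ∀ y, PG.inDeg y ≤ N.G.inDeg y := by
    intro y
    rw [hPGdef]
    exact PfAux.pg_inDeg_le y
  have hpgout : ∀ y, PG.outDeg y ≤ N.G.outDeg y := by
    intro y
    rw [hPGdef]
    exact PfAux.pg_outDeg_le y
  have hrH : r ∈ H.V := PfAux.rtg_root_mem hrun hrPGV hr0
  have hSA := hLSA.1
  have hLSA2 := hLSA.2
  by_cases hvr : v = r
  · rw [hvr]; exact hrH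
  by_cases hpvPG : (p, v) ∈ PG.E
  · -- CASE B
    obtain ⟨hpvN, xv, hxvA, πv, hπv, hzipv⟩ := PfAux.pg_mem_E.mp hpvPG
    have hvπ : v ∈ πv := List.mem_of_mem_tail (List.of_mem_zip hzipv).2
    obtain ⟨s1, t1, hsplitv⟩ := List.append_of_mem hvπ
    have hvxv : v ≠ xv := fun h => hvnotX (h ▸ hA hxvA)
    cases t1 with
    | nil =>
        exfalso
        apply hvxv
        have := hπv.2.2
        rw [hsplitv, List.getLast?_concat] at this
        simpa using this
    | cons c1 t1' =>
    have hvc : (v, c1) ∈ PG.E :=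
      PfAux.pg_arc hxvA hπv (by rw [hsplitv]; exact PfAux.mem_zip_of_split v c1 s1 t1')
    have houtv : PG.outDeg v = 1 := by
      have h1 := hpgout v
      have h2 := PfAux.one_le_outDeg hvc
      have h3 := hret.2
      omega
    have hrv : N.G.Reaches r v := ⟨_, PfAux.path_prefix_of_split hπv hsplitv⟩
    have hσ : N.G.PathFrom v xv (v :: c1 :: t1') := PfAux.path_suffix_of_split hπv hsplitv
    have hallin : ∀ e ∈ N.G.E, (e : α × α).2 = v → e ∈ PG.E := by
      intro e heE he2
      have heq : (e.1, v) = e := by rw [← he2]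
      have harcqv : (e.1, v) ∈ N.G.E := by rw [heq]; exact heE
      have hqV : e.1 ∈ N.G.V := (N.wf e heE).1
      obtain ⟨R, hR⟩ := N.reach e.1 hqV
      have hbig : N.G.PathFrom N.root xv (R ++ (v :: c1 :: t1')) :=
        PfAux.path_append_arc hR hσ harcqv
      have hrbig : r ∈ R ++ (v :: c1 :: t1') := hSA xv hxvA _ hbig
      rcases List.mem_append.mp hrbig with hrR | hrσ
      · obtain ⟨s2, t2, hsp2, _, hsuf2⟩ := PfAux.path_split hR hrR
        have hl' : N.G.PathFrom r xv ((r :: t2) ++ (v :: c1 :: t1')) :=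
          PfAux.path_append_arc hsuf2 hσ harcqv
        have hLne : (r :: t2) ≠ [] := by simp
        have hgl : (r :: t2).getLast hLne = e.1 := by
          have := hsuf2.2.2
          rw [List.getLast?_eq_getLast hLne] at this
          simpa using this
        have hLsplit : (r :: t2).dropLast ++ [e.1] = r :: t2 := by
          rw [← hgl]
          exact List.dropLast_append_getLast hLne
        have hshape : (r :: t2) ++ (v :: c1 :: t1')
            = (r :: t2).dropLast ++ e.1 :: v :: (c1 :: t1') := by
          rw [← hLsplit]
          simp
        have hzm : (e.1, v) ∈ ((r :: t2) ++ (v :: c1 :: t1')).zip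
            (((r :: t2) ++ (v :: c1 :: t1')).tail) := by
          rw [hshape]
          exact PfAux.mem_zip_of_split e.1 v _ _
        have := PfAux.pg_arc hxvA hl' hzm
        rw [heq] at this
        exact this
      · exfalso
        obtain ⟨s3, t3, hsp3, hpre3, _⟩ := PfAux.path_split hσ hrσ
        exact PfAux.not_reaches_both N.acyclic (fun h => hvr h.symm) hrv ⟨_, hpre3⟩
    have hin2 : PG.inDeg v = 2 := by
      have hcongr : N.G.E.filter (fun e => e.2 = v)
          = N.G.E.filter (fun e => e.2 = v ∧
              ∃ x ∈ A, ∃ q, N.G.PathFrom r x q ∧ e ∈ q.zip q.tail) := by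
        refine Multiset.filter_congr (fun e he => ?_)
        constructor
        · intro h2
          exact ⟨h2, (PfAux.pg_mem_E.mp (hallin e he h2)).2⟩
        · exact fun h => h.1
      have h2 : PG.inDeg v = Multiset.card (N.G.E.filter (fun e => e.2 = v ∧
          ∃ x ∈ A, ∃ q, N.G.PathFrom r x q ∧ e ∈ q.zip q.tail)) := by
        unfold Digraph'.inDeg
        have hPGE : PG.E = N.G.E.filter
            (fun e => ∃ x ∈ A, ∃ q, N.G.PathFrom r x q ∧ e ∈ q.zip q.tail) := rfl
        rw [hPGE, Multiset.filter_filter]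
      rw [h2, ← hcongr]
      exact hret.1
    have hvPGV : v ∈ PG.V := PfAux.pg_mem_V.mpr ⟨hvNV, xv, hxvA, πv, hπv, hvπ⟩
    have hΦ3init : p ≠ r → 1 ≤ PG.inDeg p := by
      intro hpr
      obtain ⟨s4, t4, hsp4⟩ := List.append_of_mem hpπ
      have hs4ne : s4 ≠ [] := by
        intro h
        rw [h] at hsp4
        apply hpr
        have := hπ.2.1
        rw [hsp4] at this
        have h2 : r = p := by simpa using this.symm
        exact h2.symm
      have hs4 : s4.dropLast ++ [s4.getLast hs4ne] = s4 :=
        List.dropLast_append_getLast hs4ne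
      have hsp5 : π = s4.dropLast ++ s4.getLast hs4ne :: p :: t4 := by
        rw [← hs4] at hsp4
        rw [hsp4]
        simp
      have : (s4.getLast hs4ne, p) ∈ PG.E :=
        PfAux.pg_arc hx0A hπ (by rw [hsp5]; exact PfAux.mem_zip_of_split _ p _ _)
      exact PfAux.one_le_inDeg this
    have hex : ∃ x1 ∈ A, ∃ P, N.G.PathFrom N.root x1 P ∧ v ∉ P := by
      by_contra hcon
      push_neg at hcon
      exact hLSA2 v (fun x hx P hP => hcon x hx P hP) hvr hrv
    obtain ⟨x1, hx1A, P1, hP1, hvP1⟩ := hex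
    have hrP1 : r ∈ P1 := hSA x1 hx1A P1 hP1
    obtain ⟨s2, t2, hsp2, _, hsuf2⟩ := PfAux.path_split hP1 hrP1
    have hQ : PG.PathFrom r x1 (r :: t2) := PfAux.pg_path hx1A hsuf2
    have hvQ : v ∉ (r :: t2) := fun h => hvP1 (by
      rw [hsp2]; exact List.mem_append_right _ h)
    by_contra hvH
    have hmain : ∀ GG, Relation.ReflTransGen Digraph'.SimpStep GG H →
        (GG.V ⊆ PG.V ∧
         (∀ y ∈ GG.V, GG.inDeg y ≤ PG.inDeg y ∧ GG.outDeg y ≤ PG.outDeg y) ∧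
         GG.inDeg r = 0 ∧
         (p ≠ r → 1 ≤ GG.inDeg p) ∧
         v ∈ GG.V ∧ (p, v) ∈ GG.E ∧ GG.inDeg v = 2 ∧ GG.outDeg v = 1 ∧
         (∃ x' ∈ A, ∃ q, GG.PathFrom r x' q ∧ v ∉ q)) → False := by
      intro GG hrg
      induction hrg using Relation.ReflTransGen.head_induction_on with
      | refl =>
          intro hΦ
          exact hvH hΦ.2.2.2.2.1
      | head st run ih =>
          rename_i GGa GGc
          intro hΦ
          obtain ⟨hΦ1, hΦ2, hΦ3, hΦ4, hΦv, hΦpv, hΦin, hΦout, x', hx'A, q, hq, hvq⟩ := hΦ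
          have hpc : p ∈ GGc.V := PfAux.rtg_V_subset run hpv
          rcases st with ⟨w, hs⟩ | ⟨e, hc, hV, hE⟩
          · -- suppression of w
            have hs' := hs
            obtain ⟨h1s, h2s, p₀, c₀, hpws, hwcs, hVs, hEs⟩ := hs'
            have hvw : v ≠ w := by
              intro h
              rw [← h, hΦin] at h1s
              exact absurd h1s (by omega)
            have hrw : r ≠ w := by
              intro h
              rw [← h, hΦ3] at h1s
              exact absurd h1s (by omega)
            have hpw' : p ≠ w := (Finset.mem_erase.mp (hVs ▸ hpc)).1
            apply ih
            refine ⟨?_, ?_, ?_, ?_, ?_, ?_, ?_, ?_, ?_⟩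
            · rw [hVs]
              exact fun y hy => hΦ1 (Finset.erase_subset _ _ hy)
            · intro y hy
              have hyw : y ≠ w := (Finset.mem_erase.mp (hVs ▸ hy)).1
              have hyA : y ∈ GGa.V := (Finset.mem_erase.mp (hVs ▸ hy)).2
              rw [PfAux.suppress_inDeg hs hyw, PfAux.suppress_outDeg hs hyw]
              exact hΦ2 y hyA
            · rw [PfAux.suppress_inDeg hs hrw]; exact hΦ3
            · intro hpr
              rw [PfAux.suppress_inDeg hs hpw']
              exact hΦ4 hpr
            · rw [hVs]
              exact Finset.mem_erase.mpr ⟨hvw, hΦv⟩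
            · rw [hEs]
              exact Multiset.mem_add.mpr (Or.inl (Multiset.mem_filter.mpr
                ⟨hΦpv, hpw', hvw⟩))
            · rw [PfAux.suppress_inDeg hs hvw]; exact hΦin
            · rw [PfAux.suppress_outDeg hs hvw]; exact hΦout
            · have hx'GG : x' ∈ GGa.V := hq.1.2.1 x' (PfAux.path_mem_right hq)
              have hx'0 : GGa.outDeg x' = 0 := by
                have h1 := (hΦ2 x' hx'GG).2
                have h2 := hpgout x'
                have h3 := (hleaf x' (hA hx'A)).2
                omega
              obtain ⟨q', hq', hsub⟩ := PfAux.psi_suppress hs hΦ3 hx'0 hq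
              exact ⟨x', hx'A, q', hq', fun h => hvq (hsub v h)⟩
          · -- deletion of a parallel arc e
            have heE : e ∈ GGa.E := PfAux.step_mem_e hc
            by_cases hepv : e = (p, v)
            · subst hepv
              have hpGG : p ∈ GGa.V := hV ▸ hpc
              have hout2G : GGa.outDeg p = 2 := by
                have hub : GGa.outDeg p ≤ PG.outDeg p := (hΦ2 p hpGG).2
                have hub2 := hpgout p
                have hub3 := PfAux2.outdeg_le_two N hE0 hpNV
                have hlb : 2 ≤ GGa.outDeg p := PfAux.two_le_outDeg_of_count hc
                omega
              by_cases hpr : p = r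
              · obtain ⟨tq, hqr⟩ := PfAux.path_cons hq
                cases tq with
                | nil =>
                    have hrx : r = x' := by
                      have := hq.2.2
                      rw [hqr] at this
                      simpa using this
                    have h1 := (hleaf x' (hA hx'A)).2
                    have h2 := PfAux.one_le_outDeg hp
                    rw [← hrx, ← hpr] at h1
                    omega
                | cons z3 tq' =>
                    have harc : (r, z3) ∈ GGa.E := by
                      have := hq.1.2.2
                      rw [hqr] at this
                      exact (List.isChain_cons_cons.mp this).1
                    have hz3 : z3 = v :=
                      PfAux.out_arcs_replicate (G := GGa) hc hout2G z3
                        (by rw [hpr]; exact harc)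
                    apply hvq
                    rw [hqr, ← hz3]
                    exact List.mem_cons_of_mem _ (List.mem_cons_self)
              · have hNout2 : N.G.outDeg p = 2 := by
                  have h1 := PfAux2.outdeg_le_two N hE0 hpNV
                  have h2 := (hΦ2 p hpGG).2
                  have h3 := hpgout p
                  omega
                have hin1 : GGa.inDeg p = 1 := by
                  have h1 := (hΦ2 p hpGG).1
                  have h2 := hpgin p
                  have h3 := PfAux2.indeg_le_one_of_outdeg_two N hE0 hpNV hNout2
                  have h4 := hΦ4 hpr
                  omega
                have hin1' : GGc.inDeg p = GGa.inDeg p :=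
                  PfAux.inDeg_erase_ne hE heE (fun h => hpvne h.symm)
                have hout1' : GGc.outDeg p = 1 := by
                  have h8 : GGa.outDeg p = GGc.outDeg p + 1 :=
                    PfAux.outDeg_erase_eq (G := GGa) (G' := GGc) hE heE rfl
                  omega
                have hfz := PfAux.rtg_frozen run hpv (by rw [hin1', hin1]) hout1'
                exact PfAux.term_no11 hterm hfz.1 hfz.2
            · have hein : e.2 ≠ v := by
                intro h2
                have hcf : 2 ≤ (GGa.E.filter (fun f => f.2 = v)).count e := by
                  rw [Multiset.count_filter, if_pos h2]; exact hc
                have hrep := Multiset.le_count_iff_replicate_le.mp hcf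
                have hfeq : Multiset.replicate 2 e = GGa.E.filter (fun f => f.2 = v) := by
                  refine Multiset.eq_of_le_of_card_le hrep ?_
                  rw [Multiset.card_replicate]
                  exact le_of_eq hΦin
                have hpvf : (p, v) ∈ GGa.E.filter (fun f => f.2 = v) :=
                  Multiset.mem_filter.mpr ⟨hΦpv, rfl⟩
                rw [← hfeq] at hpvf
                exact hepv (Multiset.eq_of_mem_replicate hpvf).symm
              have heout : e.1 ≠ v := by
                intro h1
                have := PfAux.two_le_outDeg_of_count (G := GGa) hc
                rw [h1] at this
                omega
              have hle : GGc.E ≤ GGa.E := hE ▸ Multiset.erase_le e GGa.E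
              apply ih
              refine ⟨?_, ?_, ?_, ?_, ?_, ?_, ?_, ?_, ?_⟩
              · rw [hV]; exact hΦ1
              · intro y hy
                have hyA : y ∈ GGa.V := hV ▸ hy
                exact ⟨le_trans (PfAux.inDeg_mono hle y) (hΦ2 y hyA).1,
                  le_trans (PfAux.outDeg_mono hle y) (hΦ2 y hyA).2⟩
              · have := PfAux.inDeg_mono hle r
                omega
              · intro hpr
                by_cases h2 : e.2 = p
                · have h3 := PfAux.two_le_inDeg_of_count (G := GGa) hc
                  rw [h2] at h3
                  have h4 := PfAux.inDeg_erase_eq (G := GGa) (G' := GGc) hE heE h2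
                  omega
                · rw [PfAux.inDeg_erase_ne hE heE h2]
                  exact hΦ4 hpr
              · rw [hV]; exact hΦv
              · rw [hE]
                exact (Multiset.mem_erase_of_ne (fun h => hepv h.symm)).mpr hΦpv
              · rw [PfAux.inDeg_erase_ne hE heE hein]; exact hΦin
              · rw [PfAux.outDeg_erase_ne hE heE heout]; exact hΦout
              · refine ⟨x', hx'A, q, ⟨⟨hq.1.1, ?_, ?_⟩, hq.2.1, hq.2.2⟩, hvq⟩
                · intro y hy
                  rw [hV]
                  exact hq.1.2.1 y hy
                · refine PfAux.chain'_of_zip hq.1.2.2 (fun a b hz => ?_)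
                  have hab := PfAux.rel_of_mem_zip hq.1.2.2 hz
                  by_cases habe : (a, b) = e
                  · rw [hE, habe, ← Multiset.count_pos, Multiset.count_erase_self]
                    omega
                  · rw [hE]
                    exact (Multiset.mem_erase_of_ne habe).mpr hab
    exact hmain PG hrun ⟨subset_rfl, fun y _ => ⟨le_rfl, le_rfl⟩, hr0, hΦ3init,
      hvPGV, hpvPG, hin2, houtv, x1, hx1A, r :: t2, hQ, hvQ⟩

  · -- CASE A
    exfalso
    obtain ⟨s1, t1, hsplit⟩ := List.append_of_mem hpπ
    have hpx0 : p ≠ x0 := fun h => hpnotX (h ▸ hA hx0A)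
    cases t1 with
    | nil =>
        apply hpx0
        have := hπ.2.2
        rw [hsplit, List.getLast?_concat] at this
        simpa using this
    | cons z t1' =>
        have hzzip : (p, z) ∈ π.zip π.tail := by
          rw [hsplit]; exact PfAux.mem_zip_of_split p z s1 t1'
        have hz : (p, z) ∈ PG.E := PfAux.pg_arc hx0A hπ hzzip
        have hzNE : (p, z) ∈ N.G.E := (PfAux.pg_mem_E.mp hz).1
        have hzv : z ≠ v := fun h => hpvPG (h ▸ hz)
        have hout2 : N.G.outDeg p = 2 :=
          le_antisymm (PfAux2.outdeg_le_two N hE0 hpNV)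
            (PfAux.two_le_outDeg_pair hp hzNE (fun h => hzv h.symm))
        by_cases hpr : p = r
        · -- SubA2: z is a stable ancestor strictly below r
          have hzNV : z ∈ N.G.V := (N.wf (p, z) hzNE).2
          have hzSA : N.G.StableAncestor N.root A z := by
            intro x hxA P hP
            have hrP : r ∈ P := hSA x hxA P hP
            obtain ⟨s2, t2, hsp2, _, hsuf2⟩ := PfAux.path_split hP hrP
            have hxX : x ∈ N.X := hA hxA
            have hxr : x ≠ r := by
              intro h
              have h1 := (hleaf x hxX).2
              have h2 := PfAux.one_le_outDeg hp
              rw [h, ← hpr] at h1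
              omega
            cases t2 with
            | nil =>
                exact absurd (by simpa using hsuf2.2.2 : r = x) (fun h => hxr h.symm)
            | cons z2 t2' =>
                have harc : (r, z2) ∈ N.G.E := (List.isChain_cons_cons.mp hsuf2.1.2.2).1
                have hpair := PfAux.out_pair (G := N.G) (hpr ▸ hout2) (hpr ▸ hp)
                  (hpr ▸ hzNE) (fun h => hzv h.symm) z2 harc
                rcases hpair with h | h
                · exfalso
                  apply hpvPG
                  rw [hpr]
                  subst h
                  exact PfAux.pg_arc hxA hsuf2 (PfAux.mem_zip_of_split r z2 [] t2')
                · subst h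
                  rw [hsp2]
                  exact List.mem_append_right _ (List.mem_cons_of_mem _ (List.mem_cons_self))
          have hzr : z ≠ r := by
            intro h
            rw [hpr, h] at hzNE
            exact PfAux.no_self_arc N.acyclic (hπ.1.2.1 r (PfAux.path_mem_left hπ)) hzNE
          exact hLSA2 z hzSA hzr ⟨[r, z], PfAux.path_pair (hpr ▸ hzNE)
            (hπ.1.2.1 r (PfAux.path_mem_left hπ)) hzNV⟩
        · -- SubA1: p is a (1,1)-vertex of PG, frozen to H, contradicting terminality
          have houtPG : PG.outDeg p = 1 := by
            refine le_antisymm ?_ (PfAux.one_le_outDeg hz)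
            by_contra hcon
            push_neg at hcon
            have hle : PG.E.filter (fun f => f.1 = p) ≤ N.G.E.filter (fun f => f.1 = p) :=
              Multiset.filter_le_filter _ PfAux.pg_E_le
            have hcards : Multiset.card (N.G.E.filter (fun f => f.1 = p)) = 2 := hout2
            have hcards2 : Multiset.card (N.G.E.filter (fun f => f.1 = p)) ≤
                Multiset.card (PG.E.filter (fun f => f.1 = p)) := by
              have : (2 : ℕ) ≤ Multiset.card (PG.E.filter (fun f => f.1 = p)) := hcon
              omega
            have heq := Multiset.eq_of_le_of_card_le hle hcards2
            apply hpvPG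
            have : (p, v) ∈ N.G.E.filter (fun f => f.1 = p) :=
              Multiset.mem_filter.mpr ⟨hp, rfl⟩
            rw [← heq] at this
            exact (Multiset.mem_filter.mp this).1
          have hinPG : PG.inDeg p = 1 := by
            refine le_antisymm
              (le_trans (PfAux.pg_inDeg_le p)
                (PfAux2.indeg_le_one_of_outdeg_two N hE0 hpNV hout2)) ?_
            have hs1ne : s1 ≠ [] := by
              intro h
              rw [h] at hsplit
              apply hpr
              have := hπ.2.1
              rw [hsplit] at this
              have h2 : r = p := by simpa using this.symm
              exact h2.symm
            have hs1 : s1.dropLast ++ [s1.getLast hs1ne] = s1 :=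
              List.dropLast_append_getLast hs1ne
            have hsplit2 : π = s1.dropLast ++ s1.getLast hs1ne :: p :: z :: t1' := by
              rw [← hs1] at hsplit
              rw [hsplit]
              simp
            have : (s1.getLast hs1ne, p) ∈ PG.E :=
              PfAux.pg_arc hx0A hπ (by
                rw [hsplit2]
                exact PfAux.mem_zip_of_split _ p _ _)
            exact PfAux.one_le_inDeg this
          have hfz := PfAux.rtg_frozen hrun hpv hinPG houtPG
          exact PfAux.term_no11 hterm hfz.1 hfz.2
end

section
/- Let N be a rooted binary phylogenetic network on X, let A ⊆ X, and let v be a tree vertex of N that is a descendant of the lowest stable ancestor of A. If A contains every leaf of N that is a descendant of v, then every descendant vertex of v in N is a vertex of the exhibited network N_A. -/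
open scoped Classical

namespace Digraph'

variable {α : Type*} [DecidableEq α]

set_option linter.unusedSectionVars false

section AuxLemmas
-- AUX
variable {G : Digraph' α}

lemma pathFrom_single (h : u ∈ G.V) : G.PathFrom u u [u] := by
  refine ⟨⟨by simp, by simpa using h, List.isChain_singleton _⟩, by simp, by simp⟩

lemma reaches_refl (h : u ∈ G.V) : G.Reaches u u := ⟨[u], pathFrom_single h⟩

lemma PathFrom.mem_left (h : G.PathFrom u v p) : u ∈ p := by
  obtain ⟨_, h2, _⟩ := h
  exact List.mem_of_mem_head? h2

lemma PathFrom.mem_right (h : G.PathFrom u v p) : v ∈ p := by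
  obtain ⟨_, _, h3⟩ := h
  exact List.mem_of_mem_getLast? h3

lemma PathFrom.left_mem_V (h : G.PathFrom u v p) : u ∈ G.V :=
  h.1.2.1 u h.mem_left

lemma PathFrom.right_mem_V (h : G.PathFrom u v p) : v ∈ G.V :=
  h.1.2.1 v h.mem_right

lemma Reaches.mem_left (h : G.Reaches u v) : u ∈ G.V := by
  obtain ⟨p, hp⟩ := h; exact hp.left_mem_V

lemma Reaches.mem_right (h : G.Reaches u v) : v ∈ G.V := by
  obtain ⟨p, hp⟩ := h; exact hp.right_mem_V

lemma PathFrom.trans (h1 : G.PathFrom u v p) (h2 : G.PathFrom v w q) :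
    G.PathFrom u w (p ++ q.tail) := by
  obtain ⟨⟨hp0, hpV, hpC⟩, hph, hpl⟩ := h1
  obtain ⟨⟨hq0, hqV, hqC⟩, hqh, hql⟩ := h2
  obtain ⟨t, rfl⟩ : ∃ t, q = v :: t := by
    cases q with
    | nil => simp at hq0
    | cons a t => exact ⟨t, by simpa using (by simpa using hqh : a = v) ▸ rfl⟩
  simp only [List.tail_cons]
  refine ⟨⟨by simp [hp0], ?_, ?_⟩, ?_, ?_⟩
  · intro z hz
    rcases List.mem_append.1 hz with h | h
    · exact hpV z h
    · exact hqV z (List.mem_cons_of_mem _ h)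
  · refine List.IsChain.append hpC (hqC.tail) ?_
    intro x hx y hy
    have hx' : x = v := by rw [hpl] at hx; exact (by simpa using hx : v = x).symm
    subst hx'
    rcases List.isChain_cons.1 hqC with ⟨h1, _⟩
    exact h1 y hy
  · rw [List.head?_append_of_ne_nil _ hp0] -- maybe wrong name
    exact hph
  · cases t with
    | nil =>
      have hvw : v = w := by simpa using hql
      simpa [hvw] using hpl
    | cons b t' =>
      rw [List.getLast?_append_cons]
      simpa using hql

lemma Reaches.trans (h1 : G.Reaches u v) (h2 : G.Reaches v w) : G.Reaches u w := by
  obtain ⟨p, hp⟩ := h1; obtain ⟨q, hq⟩ := h2; exact ⟨_, hp.trans hq⟩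

lemma reaches_of_arc {a b : α} (he : (a, b) ∈ G.E) (h1 : a ∈ G.V) (h2 : b ∈ G.V) :
    G.Reaches a b :=
  ⟨[a, b], ⟨by simp, by intro z hz; rcases (by simpa using hz) with rfl | rfl <;> assumption,
    List.isChain_pair.2 he⟩, by simp, by simp⟩


lemma zip_tail_cons (x : α) {l : List α} (h : l ≠ []) :
    ((x :: l).zip (x :: l).tail) = (x, l.head h) :: l.zip l.tail := by
  cases l with
  | nil => simp at h
  | cons a m => simp

lemma mem_zip_tail_of_eq {l s t : List α} {a b : α} (h : l = s ++ a :: b :: t) :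
    (a, b) ∈ l.zip l.tail := by
  subst h
  induction s with
  | nil => simp
  | cons c s ih =>
    rw [List.cons_append, zip_tail_cons c (by simp)]
    exact List.mem_cons_of_mem _ ih

lemma arc_of_mem_zip_tail {l : List α} (hC : l.Chain' (fun u v => (u, v) ∈ G.E))
    {e : α × α} (he : e ∈ l.zip l.tail) : e ∈ G.E := by
  induction l with
  | nil => simp at he
  | cons a m ih =>
    cases m with
    | nil => simp at he
    | cons b t =>
      simp only [List.zip_cons_cons, List.tail_cons, List.mem_cons] at he
      rcases he with rfl | he
      · exact (List.isChain_cons_cons.1 hC).1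
      · exact ih (List.isChain_cons_cons.1 hC).2 (by simpa using he)

/-- suffix of a path is a path -/
lemma pathFrom_suffix {p : List α} {u x : α} (h : G.PathFrom u x p) {a : α}
    (ha : a ∈ p) : ∃ s t, p = s ++ a :: t ∧ G.PathFrom a x (a :: t) := by
  obtain ⟨s, t, rfl⟩ := List.append_of_mem ha
  refine ⟨s, t, rfl, ⟨⟨by simp, ?_, ?_⟩, by simp, ?_⟩⟩
  · intro z hz; exact h.1.2.1 z (by simp [hz])
  · exact h.1.2.2.suffix ⟨s, rfl⟩
  · rw [← List.getLast?_append_cons s a t]; exact h.2.2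

lemma acyclic_antisymm (hac : G.Acyclic) (h1 : G.Reaches a b) (h2 : G.Reaches b a) :
    a = b := by
  obtain ⟨p, hp⟩ := h1
  obtain ⟨t, rfl⟩ : ∃ t, p = a :: t := by
    cases p with
    | nil => exact absurd rfl hp.1.1
    | cons c t => exact ⟨t, by rw [(by simpa using hp.2.1 : c = a)]⟩
  cases t with
  | nil => simpa using hp.2.2
  | cons c t' =>
    exfalso
    have harc : (a, c) ∈ G.E := (List.isChain_cons_cons.1 hp.1.2.2).1
    have hcb : G.PathFrom c b (c :: t') := by
      refine ⟨⟨by simp, ?_, (List.isChain_cons_cons.1 hp.1.2.2).2⟩, by simp, ?_⟩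
      · intro z hz; exact hp.1.2.1 z (by simp [hz])
      · simpa [List.getLast?_cons_cons] using hp.2.2
    exact hac (a, c) harc (Reaches.trans ⟨_, hcb⟩ h2)

/-- last arc of a nontrivial path -/
lemma pathFrom_last_arc {p : List α} {u x : α} (h : G.PathFrom u x p) (hne : u ≠ x) :
    ∃ a, (a, x) ∈ G.E ∧ G.Reaches u a := by
  have hp0 := h.1.1
  have hx : p.getLast hp0 = x := by
    have h2 := h.2.2
    rw [List.getLast?_eq_getLast hp0] at h2
    exact Option.some_injective _ h2
  have hdecomp : p = p.dropLast ++ [x] := by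
    rw [← hx]; exact (List.dropLast_append_getLast hp0).symm
  have hd0 : p.dropLast ≠ [] := by
    intro hnil
    rw [hnil, List.nil_append] at hdecomp
    rw [hdecomp] at h
    exact hne (by simpa using h.2.1 : x = u).symm
  set q := p.dropLast with hq
  have ha : q.getLast hd0 ∈ q.getLast? := by rw [List.getLast?_eq_getLast hd0]; rfl
  set a := q.getLast hd0 with hadef
  have hqdec : q = q.dropLast ++ [a] := (List.dropLast_append_getLast hd0).symm
  have harc : (a, x) ∈ G.E := by
    refine arc_of_mem_zip_tail h.1.2.2 (mem_zip_tail_of_eq (s := q.dropLast) (t := []) ?_)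
    rw [hdecomp]; rw [hqdec]; simp
  refine ⟨a, harc, ⟨q, ⟨⟨hd0, ?_, ?_⟩, ?_, List.getLast?_eq_getLast hd0⟩⟩⟩
  · intro z hz; exact h.1.2.1 z (by rw [hdecomp]; exact List.mem_append_left _ hz)
  · have := h.1.2.2; rw [hdecomp] at this; exact this.prefix ⟨[x], rfl⟩
  · have := h.2.1; rw [hdecomp, List.head?_append_of_ne_nil _ hd0] at this; exact this

lemma pathFrom_prefix {p : List α} {u x a : α} (h : G.PathFrom u x p) (ha : a ∈ p) :
    G.Reaches u a := by
  obtain ⟨s, t, rfl⟩ := List.append_of_mem ha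
  refine ⟨s ++ [a], ⟨⟨by simp, ?_, ?_⟩, ?_, List.getLast?_append_cons s a []⟩⟩
  · intro z hz
    rcases List.mem_append.1 hz with h1 | h1
    · exact h.1.2.1 z (List.mem_append_left _ h1)
    · exact h.1.2.1 z (by simp_all)
  · exact h.1.2.2.prefix ⟨t, by simp⟩
  · cases s with
    | nil => simpa using h.2.1
    | cons b s' =>
      rw [List.head?_append_of_ne_nil _ (by simp)]
      have := h.2.1
      rw [List.head?_append_of_ne_nil _ (by simp)] at this
      exact this

end AuxLemmas

end Digraph'

section MainAux

open Digraph'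

variable {α : Type*} [DecidableEq α]

lemma filter_erase_of_neg {β : Type*} [DecidableEq β] {s : Multiset β} {e : β}
    {p : β → Prop} [DecidablePred p] (hp : ¬ p e) :
    (s.erase e).filter p = s.filter p := by
  by_cases he : e ∈ s
  · conv_rhs => rw [← Multiset.cons_erase he]
    rw [Multiset.filter_cons_of_neg _ hp]
  · rw [Multiset.erase_of_notMem he]

/-- The invariant maintained through simplification. -/
def Good (N : PhyloNet α) (v : α) (G : Digraph' α) : Prop :=
  (∀ u, N.G.Reaches v u → u ∈ G.V) ∧
  (∀ u, N.G.Reaches v u →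
    G.E.filter (fun e => e.1 = u) = N.G.E.filter (fun e => e.1 = u)) ∧
  (∀ u, N.G.Reaches v u → N.G.inDeg u = 2 →
    ∃ a b : α, a ≠ b ∧ N.G.Reaches v a ∧ (a, u) ∈ N.G.E ∧
      (N.G.Reaches v b → (b, u) ∈ N.G.E) ∧
      G.E.filter (fun e => e.2 = u) = {(a, u), (b, u)})

lemma nondeg_of_tree (N : PhyloNet α) (v : α) (htree : N.G.inDeg v = 1 ∧ N.G.outDeg v = 2) :
    N.G.inDeg N.root = 0 ∧ N.G.outDeg N.root = 2 ∧
     (∀ x ∈ N.X, x ∈ N.G.V ∧ N.G.inDeg x = 1 ∧ N.G.outDeg x = 0) ∧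
     (∀ u ∈ N.G.V, N.G.outDeg u = 0 → u ∈ N.X) ∧
     (∀ u ∈ N.G.V, u ≠ N.root → u ∉ N.X →
       (N.G.inDeg u = 1 ∧ N.G.outDeg u = 2) ∨ (N.G.inDeg u = 2 ∧ N.G.outDeg u = 1)) := by
  rcases N.binary with h | h
  · exfalso
    have h1 := htree.1
    rw [Digraph'.inDeg, h.2.1] at h1
    simp at h1
  · have hinst : (fun (a b : α) => Classical.propDecidable (a = b)) =
        (inferInstance : DecidableEq α) := Subsingleton.elim _ _
    rw [hinst] at h
    exact h

lemma reaches_leaf (N : PhyloNet α)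
    (hX : ∀ u ∈ N.G.V, N.G.outDeg u = 0 → u ∈ N.X)
    (u : α) (hu : u ∈ N.G.V) : ∃ x ∈ N.X, N.G.Reaches u x := by
  suffices H : ∀ n (u : α), u ∈ N.G.V →
      ((N.G.V).filter (fun z => N.G.Reaches u z)).card ≤ n →
      ∃ x ∈ N.X, N.G.Reaches u x from H _ u hu le_rfl
  intro n
  induction n with
  | zero =>
    intro u hu hc
    exfalso
    have hm : u ∈ (N.G.V).filter (fun z => N.G.Reaches u z) :=
      Finset.mem_filter.2 ⟨hu, Digraph'.reaches_refl hu⟩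
    have := Finset.card_pos.2 ⟨u, hm⟩
    omega
  | succ n ih =>
    intro u hu hc
    by_cases ho : N.G.outDeg u = 0
    · exact ⟨u, hX u hu ho, Digraph'.reaches_refl hu⟩
    · have hne : (N.G.E.filter (fun e => e.1 = u)) ≠ 0 := by
        intro h0
        rw [Digraph'.outDeg, h0] at ho
        simp at ho
      obtain ⟨e, he⟩ := Multiset.exists_mem_of_ne_zero hne
      have heE : e ∈ N.G.E := Multiset.mem_of_mem_filter he
      have he1 : e.1 = u := (Multiset.mem_filter.1 he).2
      obtain ⟨hu1, hu2⟩ := N.wf e heE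
      have harc : (u, e.2) ∈ N.G.E := by rw [← he1]; simpa using heE
      have hreach : N.G.Reaches u e.2 :=
        Digraph'.reaches_of_arc harc (he1 ▸ hu1) hu2
      have hnotback : ¬ N.G.Reaches e.2 u := by
        intro h
        exact N.acyclic e heE (by rwa [he1])
      have hsub : (N.G.V).filter (fun z => N.G.Reaches e.2 z) ⊆
          ((N.G.V).filter (fun z => N.G.Reaches u z)).erase u := by
        intro z hz
        obtain ⟨hzV, hzr⟩ := Finset.mem_filter.1 hz
        refine Finset.mem_erase.2 ⟨?_, Finset.mem_filter.2 ⟨hzV, hreach.trans hzr⟩⟩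
        rintro rfl
        exact hnotback hzr
      have hcard := Finset.card_le_card hsub
      have humem : u ∈ (N.G.V).filter (fun z => N.G.Reaches u z) :=
        Finset.mem_filter.2 ⟨hu, Digraph'.reaches_refl hu⟩
      rw [Finset.card_erase_of_mem humem] at hcard
      obtain ⟨x, hx1, hx2⟩ := ih e.2 hu2 (by omega)
      exact ⟨x, hx1, hreach.trans hx2⟩

lemma good_noSuppress (N : PhyloNet α) (v : α)
    (htree : N.G.inDeg v = 1 ∧ N.G.outDeg v = 2)
    {G : Digraph' α} (hG : Good N v G) {u : α} (hu : N.G.Reaches v u) :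
    ¬ (G.inDeg u = 1 ∧ G.outDeg u = 1) := by
  rintro ⟨hin, hout⟩
  have hb := nondeg_of_tree N v htree
  have huV : u ∈ N.G.V := hu.mem_right
  have houtN : N.G.outDeg u = 1 := by
    rw [Digraph'.outDeg, ← hG.2.1 u hu]
    exact hout
  rcases eq_or_ne u N.root with hroot | hroot
  · have hvu : v = u :=
      Digraph'.acyclic_antisymm N.acyclic hu (hroot ▸ N.reach v hu.mem_left)
    have h1 := htree.1
    rw [hvu, hroot] at h1
    rw [hb.1] at h1
    omega
  by_cases hXu : u ∈ N.X
  · have h0 := (hb.2.2.1 u hXu).2.2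
    omega
  · rcases hb.2.2.2.2 u huV hroot hXu with ⟨_, h2⟩ | ⟨h1, h2⟩
    · omega
    · obtain ⟨a, b, hab, _, _, _, hfil⟩ := hG.2.2 u hu h1
      have hin2 : G.inDeg u = 2 := by
        rw [Digraph'.inDeg, hfil]
        simp
      omega

lemma good_base (N : PhyloNet α) (A : Finset α) (v r : α)
    (htree : N.G.inDeg v = 1 ∧ N.G.outDeg v = 2)
    (hSA : N.G.StableAncestor N.root A r)
    (hdesc : N.G.Reaches r v)
    (hleaves : ∀ x ∈ N.X, N.G.Reaches v x → x ∈ A) :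
    Good N v (N.G.pathGraph r A) := by
  have hb := nondeg_of_tree N v htree
  have hleaf : ∀ u : α, N.G.Reaches v u → ∃ x ∈ A, N.G.Reaches u x := by
    intro u hu
    obtain ⟨x, hxX, hux⟩ := reaches_leaf N hb.2.2.2.1 u hu.mem_right
    exact ⟨x, hleaves x hxX (hu.trans hux), hux⟩
  have harc_out : ∀ u c : α, N.G.Reaches v u → (u, c) ∈ N.G.E →
      ∃ x ∈ A, ∃ p, N.G.PathFrom r x p ∧ (u, c) ∈ p.zip p.tail := by
    intro u c hu harc
    have hcV : c ∈ N.G.V := (N.wf _ harc).2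
    have huV : u ∈ N.G.V := hu.mem_right
    obtain ⟨p1, hp1⟩ := hdesc.trans hu
    have huc : N.G.PathFrom u c [u, c] :=
      ⟨⟨by simp, by intro z hz; rcases (by simpa using hz : z = u ∨ z = c) with rfl | rfl <;>
        assumption, List.isChain_pair.2 harc⟩, by simp, by simp⟩
    obtain ⟨x, hxA, hcx⟩ := hleaf c (hu.trans ⟨_, huc⟩)
    obtain ⟨p3, hp3⟩ := hcx
    refine ⟨x, hxA, _, (hp1.trans huc).trans hp3, ?_⟩
    obtain ⟨s, hs⟩ : ∃ s, p1 = s ++ [u] :=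
      ⟨_, (List.dropLast_append_getLast? u (Option.mem_def.2 hp1.2.2)).symm⟩
    exact Digraph'.mem_zip_tail_of_eq (s := s) (t := p3.tail) (by simp [hs])
  have huner : ∀ u, N.G.Reaches v u → N.G.inDeg u = 2 → r ≠ u := by
    intro u hu h2 hr
    have hvr : v = u := Digraph'.acyclic_antisymm N.acyclic hu (hr ▸ hdesc)
    have h1 := htree.1
    rw [hvr] at h1
    omega
  have harc_in : ∀ u q : α, N.G.Reaches v u → N.G.inDeg u = 2 → (q, u) ∈ N.G.E →
      ∃ x ∈ A, ∃ p, N.G.PathFrom r x p ∧ (q, u) ∈ p.zip p.tail := by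
    intro u q hu h2 harc
    have hqV : q ∈ N.G.V := (N.wf _ harc).1
    have huV : u ∈ N.G.V := (N.wf _ harc).2
    obtain ⟨p1, hp1⟩ := N.reach q hqV
    have hqu : N.G.PathFrom q u [q, u] :=
      ⟨⟨by simp, by intro z hz; rcases (by simpa using hz : z = q ∨ z = u) with rfl | rfl <;>
        assumption, List.isChain_pair.2 harc⟩, by simp, by simp⟩
    obtain ⟨x, hxA, hux⟩ := hleaf u hu
    obtain ⟨p3, hp3⟩ := hux
    have hP := (hp1.trans hqu).trans hp3
    have hrmem : r ∈ (p1 ++ [q, u].tail) ++ p3.tail := hSA x hxA _ hP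
    have hPlist : (p1 ++ [q, u].tail) ++ p3.tail = p1 ++ (u :: p3.tail) := by simp
    rw [hPlist] at hrmem
    rcases List.mem_append.1 hrmem with hr1 | hr2
    · obtain ⟨s, t, hst, hsuf⟩ := Digraph'.pathFrom_suffix hp1 hr1
      refine ⟨x, hxA, _, (hsuf.trans hqu).trans hp3, ?_⟩
      obtain ⟨s2, hs2⟩ : ∃ s2, (r :: t : List α) = s2 ++ [q] :=
        ⟨_, (List.dropLast_append_getLast? q (Option.mem_def.2 hsuf.2.2)).symm⟩
      exact Digraph'.mem_zip_tail_of_eq (s := s2) (t := p3.tail) (by simp [hs2])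
    · rcases List.mem_cons.1 hr2 with hru | hrp3
      · exact absurd hru (huner u hu h2)
      · have hur : N.G.Reaches u r := Digraph'.pathFrom_prefix hp3 (List.mem_of_mem_tail hrp3)
        exact absurd (Digraph'.acyclic_antisymm N.acyclic (hdesc.trans hu) hur) (huner u hu h2)
  have pairN : ∀ u, N.G.Reaches v u → N.G.inDeg u = 2 →
      ∃ a b : α, a ≠ b ∧ N.G.Reaches v a ∧ (a, u) ∈ N.G.E ∧ (b, u) ∈ N.G.E ∧
        N.G.E.filter (fun e => e.2 = u) = {(a, u), (b, u)} := by
    intro u hu h2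
    have h2' : (N.G.E.filter (fun e => e.2 = u)).card = 2 := h2
    obtain ⟨e1, e2, hpair⟩ := Multiset.card_eq_two.1 h2'
    have he1m : e1 ∈ N.G.E.filter (fun e => e.2 = u) := by rw [hpair]; simp
    have he2m : e2 ∈ N.G.E.filter (fun e => e.2 = u) := by rw [hpair]; simp
    have he1E := Multiset.mem_of_mem_filter he1m
    have he2E := Multiset.mem_of_mem_filter he2m
    have he1u : e1.2 = u := (Multiset.mem_filter.1 he1m).2
    have he2u : e2.2 = u := (Multiset.mem_filter.1 he2m).2
    have hne12 : e1 ≠ e2 := by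
      rintro rfl
      have hnp : Multiset.count e1 N.G.E ≤ 1 := by
        have hh := N.noParallel e1
        have hinst : (fun (a b : α) => Classical.propDecidable (a = b)) =
            (inferInstance : DecidableEq α) := Subsingleton.elim _ _
        rw [hinst] at hh
        exact hh
      have hcle : Multiset.count e1 (N.G.E.filter (fun e => e.2 = u)) ≤ 1 :=
        le_trans (Multiset.count_le_of_le e1 (Multiset.filter_le _ N.G.E)) hnp
      rw [hpair] at hcle
      simp at hcle
    have huv : u ≠ v := by
      intro h
      rw [h] at h2
      omega
    obtain ⟨p, hp⟩ := hu
    obtain ⟨a0, ha0E, ha0r⟩ := Digraph'.pathFrom_last_arc hp (fun h => huv h.symm)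
    have ha0m : (a0, u) ∈ N.G.E.filter (fun e => e.2 = u) := Multiset.mem_filter.2 ⟨ha0E, rfl⟩
    rw [hpair] at ha0m
    have hsources : e1.1 ≠ e2.1 := by
      intro h
      exact hne12 (Prod.ext h (he1u.trans he2u.symm))
    rcases (by simpa using ha0m : (a0, u) = e1 ∨ (a0, u) = e2) with h | h
    · refine ⟨a0, e2.1, ?_, ha0r, ha0E, ?_, ?_⟩
      · rw [show a0 = e1.1 from congrArg Prod.fst h]; exact hsources
      · rw [show (e2.1, u) = e2 from Prod.ext rfl he2u.symm]; exact he2E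
      · rw [hpair, ← h, show (e2.1, u) = e2 from Prod.ext rfl he2u.symm]
    · refine ⟨a0, e1.1, ?_, ha0r, ha0E, ?_, ?_⟩
      · rw [show a0 = e2.1 from congrArg Prod.fst h]; exact fun hh => hsources hh.symm
      · rw [show (e1.1, u) = e1 from Prod.ext rfl he1u.symm]; exact he1E
      · rw [hpair, ← h, show (e1.1, u) = e1 from Prod.ext rfl he1u.symm]
        rw [Multiset.pair_comm]
  refine ⟨?_, ?_, ?_⟩
  · intro u hu
    obtain ⟨p1, hp1⟩ := hdesc.trans hu
    obtain ⟨x, hxA, hux⟩ := hleaf u hu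
    obtain ⟨p3, hp3⟩ := hux
    refine Finset.mem_filter.2 ⟨hu.mem_right, x, hxA, _, hp1.trans hp3, ?_⟩
    exact List.mem_append_left _ hp1.mem_right
  · intro u hu
    show ((N.G.E.filter _).filter _) = _
    rw [Multiset.filter_filter]
    refine Multiset.filter_congr ?_
    rintro ⟨a, c⟩ he
    constructor
    · exact fun h => h.1
    · rintro (rfl : a = u)
      exact ⟨rfl, harc_out a c hu he⟩
  · intro u hu h2
    obtain ⟨a, b, hab, haD, haE, hbE, hfilN⟩ := pairN u hu h2
    refine ⟨a, b, hab, haD, haE, fun _ => hbE, ?_⟩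
    show ((N.G.E.filter _).filter _) = _
    rw [Multiset.filter_filter]
    rw [Multiset.filter_congr (q := fun e => e.2 = u), hfilN]
    rintro ⟨q, c⟩ he
    constructor
    · exact fun h => h.1
    · rintro (rfl : c = u)
      exact ⟨rfl, harc_in c q hu h2 he⟩

lemma good_step (N : PhyloNet α) (v : α)
    (htree : N.G.inDeg v = 1 ∧ N.G.outDeg v = 2)
    {G G' : Digraph' α} (hG : Good N v G) (h : Digraph'.SimpStep G G') :
    Good N v G' := by
  have hinst : (fun (a b : α) => Classical.propDecidable (a = b)) =
      (inferInstance : DecidableEq α) := Subsingleton.elim _ _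
  obtain ⟨hGV, hGout, hGin⟩ := hG
  rcases h with ⟨s, hin1, hout1, p, c, hps, hsc, hV', hE'⟩ | ⟨e, hcnt, hV', hE'⟩
  · -- suppression of s
    have hsD : ¬ N.G.Reaches v s := fun hs =>
      good_noSuppress N v htree ⟨hGV, hGout, hGin⟩ hs ⟨hin1, hout1⟩
    have hnoarc : ∀ u, N.G.Reaches v u → (u, s) ∉ G.E := by
      intro u hu hmem
      apply hsD
      have h1 : (u, s) ∈ G.E.filter (fun e => e.1 = u) := Multiset.mem_filter.2 ⟨hmem, rfl⟩
      rw [hGout u hu] at h1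
      have h2 : (u, s) ∈ N.G.E := (Multiset.mem_filter.1 h1).1
      exact hu.trans (Digraph'.reaches_of_arc h2 (N.wf _ h2).1 (N.wf _ h2).2)
    have hout_uniq : ∀ z, (s, z) ∈ G.E → z = c := by
      intro z hz
      have hout1' : (G.E.filter (fun e => e.1 = s)).card = 1 := hout1
      obtain ⟨e0, he0⟩ := Multiset.card_eq_one.1 hout1'
      have h1 : (s, z) ∈ G.E.filter (fun e => e.1 = s) := Multiset.mem_filter.2 ⟨hz, rfl⟩
      have h2 : (s, c) ∈ G.E.filter (fun e => e.1 = s) := Multiset.mem_filter.2 ⟨hsc, rfl⟩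
      rw [he0, Multiset.mem_singleton] at h1 h2
      have := h1.trans h2.symm
      exact (Prod.mk.injEq _ _ _ _ ▸ this).2
    have hpD : ¬ N.G.Reaches v p := fun hp => hnoarc p hp hps
    refine ⟨?_, ?_, ?_⟩
    · intro u hu
      rw [hV']
      exact Finset.mem_erase.2 ⟨fun h => hsD (h ▸ hu), hGV u hu⟩
    · intro u hu
      have hus : u ≠ s := fun h => hsD (h ▸ hu)
      rw [hE', Multiset.filter_add]
      have hsing : Multiset.filter (fun e => e.1 = u) ({(p, c)} : Multiset (α × α)) = 0 := by
        rw [Multiset.filter_singleton, if_neg (fun h => hpD ((h : p = u) ▸ hu))]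
        rfl
      rw [hsing, add_zero]
      show ((G.E.filter _).filter _) = _
      rw [Multiset.filter_filter]
      rw [Multiset.filter_congr (q := fun e => e.1 = u)]
      · exact hGout u hu
      · intro e he
        constructor
        · exact fun h => h.1
        · intro h1
          refine ⟨h1, h1 ▸ hus, fun h2 => hnoarc u hu ?_⟩
          have he' : e = (u, s) := Prod.ext h1 h2
          rwa [he'] at he
    · intro u hu h2
      obtain ⟨a, b, hab, haD, haN, hbimp, hfil⟩ := hGin u hu h2
      have hus : u ≠ s := fun h => hsD (h ▸ hu)
      have hfil' : (G.deleteVertex s).E.filter (fun e => e.2 = u) =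
          Multiset.filter (fun e => e.1 ≠ s) ({(a, u), (b, u)} : Multiset (α × α)) := by
        show ((G.E.filter _).filter _) = _
        rw [Multiset.filter_filter]
        rw [Multiset.filter_congr (q := fun e => e.1 ≠ s ∧ e.2 = u)]
        · rw [← Multiset.filter_filter, hfil]
        · intro e he
          constructor
          · exact fun h => ⟨h.2.1, h.1⟩
          · exact fun h => ⟨h.2, h.1, h.2 ▸ hus.symm ∘ Eq.symm⟩
      rw [hE', Multiset.filter_add, hfil']
      by_cases hc : c = u
      · subst hc
        have hsmem : (s, c) ∈ G.E.filter (fun e => e.2 = c) := Multiset.mem_filter.2 ⟨hsc, rfl⟩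
        rw [hfil] at hsmem
        have hsb : s = b := by
          rcases (by simpa using hsmem : (s, c) = (a, c) ∨ (s, c) = (b, c)) with h | h
          · exact absurd ((show s = a from congrArg Prod.fst h) ▸ haD) hsD
          · exact congrArg Prod.fst h
        have has : a ≠ s := fun h => hsD (h ▸ haD)
        have pairfil : Multiset.filter (fun e => e.1 ≠ s) ({(a, c), (b, c)} : Multiset (α × α)) =
            {(a, c)} := by
          rw [show ({(a, c), (b, c)} : Multiset (α × α)) = (a, c) ::ₘ {(b, c)} from rfl]
          rw [Multiset.filter_cons_of_pos _ (by exact has), Multiset.filter_singleton,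
            if_neg (by simp [← hsb])]
          rfl
        rw [pairfil]
        have hpa : a ≠ p := fun h => hnoarc a haD (h ▸ hps)
        refine ⟨a, p, hpa, haD, haN, fun hp => absurd hp hpD, ?_⟩
        rw [Multiset.filter_singleton, if_pos rfl, Multiset.singleton_add]
        simp [Multiset.insert_eq_cons]
      · have hsnot : (s, u) ∉ G.E := fun h => hc (hout_uniq u h).symm
        have haGE : (a, u) ∈ G.E := Multiset.mem_of_mem_filter (by rw [hfil]; simp)
        have hbGE : (b, u) ∈ G.E := Multiset.mem_of_mem_filter (by rw [hfil]; simp)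
        have has : a ≠ s := fun h => hsnot (h ▸ haGE)
        have hbs : b ≠ s := fun h => hsnot (h ▸ hbGE)
        have pairfil : Multiset.filter (fun e => e.1 ≠ s) ({(a, u), (b, u)} : Multiset (α × α)) =
            {(a, u), (b, u)} := by
          refine Multiset.filter_eq_self.2 ?_
          intro e he
          rcases (by simpa using he : e = (a, u) ∨ e = (b, u)) with rfl | rfl
          · exact has
          · exact hbs
        have hsing0 : Multiset.filter (fun e => e.2 = u) ({(p, c)} : Multiset (α × α)) = 0 := by
          rw [Multiset.filter_singleton, if_neg (by exact hc)]
          rfl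
        rw [pairfil, hsing0, add_zero]
        exact ⟨a, b, hab, haD, haN, hbimp, rfl⟩
  · -- delete a parallel arc
    have heE : e ∈ G.E := Multiset.count_pos.1 (by omega)
    have he1 : ¬ N.G.Reaches v e.1 := by
      intro hre
      have hcf : Multiset.count e (G.E.filter (fun x => x.1 = e.1)) = Multiset.count e G.E :=
        Multiset.count_filter_of_pos rfl
      rw [hGout _ hre] at hcf
      have hle : Multiset.count e (N.G.E.filter (fun x => x.1 = e.1)) ≤ Multiset.count e N.G.E :=
        Multiset.count_le_of_le e (Multiset.filter_le _ N.G.E)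
      have hnp : Multiset.count e N.G.E ≤ 1 := by
        have hh := N.noParallel e
        rw [hinst] at hh
        exact hh
      omega
    refine ⟨?_, ?_, ?_⟩
    · intro u hu
      rw [hV']
      exact hGV u hu
    · intro u hu
      rw [hE', filter_erase_of_neg (s := G.E) (e := e) (p := fun x : α × α => x.1 = u) (fun h => he1 (h ▸ hu))]
      exact hGout u hu
    · intro u hu h2
      obtain ⟨a, b, hab, haD, haN, hbimp, hfil⟩ := hGin u hu h2
      have he2 : ¬ (e.2 = u) := by
        intro h
        have hcf : Multiset.count e (G.E.filter (fun x => x.2 = u)) = Multiset.count e G.E :=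
          Multiset.count_filter_of_pos h
        rw [hfil] at hcf
        have hle1 : Multiset.count e ({(a, u), (b, u)} : Multiset (α × α)) ≤ 1 := by
          rw [show ({(a, u), (b, u)} : Multiset (α × α)) = (a, u) ::ₘ {(b, u)} from rfl]
          rw [Multiset.count_cons, Multiset.count_singleton]
          split_ifs with h1 h2'
          · exact absurd (h2' ▸ h1 : (a,u) = (b,u)) (by simp [hab])
          · omega
          · omega
          · omega
        omega
      refine ⟨a, b, hab, haD, haN, hbimp, ?_⟩
      rw [hE', filter_erase_of_neg (s := G.E) (e := e) (p := fun x : α × α => x.2 = u) he2]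
      exact hfil

end MainAux

/-- if a tree vertex `v` is a descendant of `lsa(A)` and `A`
contains every leaf descendant of `v`, then every descendant of `v` is a
vertex of the exhibited network `N_A`. -/
theorem descendants_mem_exhibited
    {α : Type*} [DecidableEq α] (N : PhyloNet α) (A : Finset α)
    (hA : A ⊆ N.X) (v r : α)
    (htree : N.G.inDeg v = 1 ∧ N.G.outDeg v = 2)
    (hr : N.G.IsLowestSA N.root A r) (hdesc : N.G.Reaches r v)
    (hleaves : ∀ x ∈ N.X, N.G.Reaches v x → x ∈ A)
    (H : Digraph' α) (hH : Digraph'.FullSimp (N.G.pathGraph r A) H)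
    (w : α) (hw : N.G.Reaches v w) :
    w ∈ H.V := by
  have hbase := good_base N A v r htree hr.1 hdesc hleaves
  obtain ⟨hsteps, -⟩ := hH
  have hgood : Good N v H := by
    induction hsteps with
    | refl => exact hbase
    | tail _ hstep ih => exact good_step N v htree ih hstep
  exact hgood.1 w hw
end
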